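/- arXiv:1812.11635 — 7 statements merged into one kernel-verified Lean document; each statement's English description precedes it below -/
import Mathlib

section
/- Let l ∈ F^× \ (F^×)² and 𝔟 a fractional ideal of F be such that (l,𝔟) is a fundamental discriminant and such that l𝔟² is an integral ideal of 𝒪 coprime to 2𝒪. Let D ∈ F^× \ (F^×)² be such that τ(lD) < 0 for every real embedding τ of F, and let 𝔞 be a fractional ideal of F with D ∈ 𝔞⁻². Set Δ = lD and 𝔠 = 𝔞𝔟. Then (D,𝔞) is a discriminant if and only if (Δ,𝔠) is a discriminant. -/
open NumberField

/-- The subset `𝒪 + 𝔞·ω` of `K`. -/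
def orderSet (F : Type*) [Field F] [NumberField F] {K : Type*} [Field K] [Algebra F K]
    (𝔞 : FractionalIdeal (nonZeroDivisors (𝓞 F)) F) (ω : K) : Set K :=
  {y | ∃ c : 𝓞 F, ∃ α ∈ 𝔞,
    y = algebraMap F K (algebraMap (𝓞 F) F c) + algebraMap F K α * ω}

/-- `(ξ, 𝔞)` is a discriminant: there is `ω` in the quadratic extension `K` with
`disc ω = (ω - ω̄)² = ξ` such that `𝒪 + 𝔞·ω` is a subring (an order) of `K`. -/
def IsDisc (F : Type*) [Field F] [NumberField F] {K : Type*} [Field K] [Algebra F K]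
    (σ : K ≃ₐ[F] K) (ξ : F) (𝔞 : FractionalIdeal (nonZeroDivisors (𝓞 F)) F) : Prop :=
  ∃ ω : K, (ω - σ ω) ^ 2 = algebraMap F K ξ ∧
    ∃ S : Subring K, (S : Set K) = orderSet F 𝔞 ω

/-- `(ξ, 𝔞)` is a fundamental discriminant: the order `𝒪 + 𝔞·ω` is the maximal order,
i.e. the integral closure of `𝒪` in `K`. -/
def IsFundDisc (F : Type*) [Field F] [NumberField F] {K : Type*} [Field K] [Algebra F K]
    [Algebra (𝓞 F) K] [IsScalarTower (𝓞 F) F K]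
    (σ : K ≃ₐ[F] K) (ξ : F) (𝔞 : FractionalIdeal (nonZeroDivisors (𝓞 F)) F) : Prop :=
  ∃ ω : K, (ω - σ ω) ^ 2 = algebraMap F K ξ ∧
    ∃ S : Subring K, (S : Set K) = orderSet F 𝔞 ω ∧
      (S : Set K) = (integralClosure (𝓞 F) K : Set K)

section Quad
variable {F : Type*} [Field F] {K : Type*} [Field K] [Algebra F K]

lemma coord_unique {ω : K} (hωF : ∀ a : F, ω ≠ algebraMap F K a) {a b a' b' : F}
    (h : algebraMap F K a + algebraMap F K b * ω = algebraMap F K a' + algebraMap F K b' * ω) :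
    a = a' ∧ b = b' := by
  have hinj := (algebraMap F K).injective
  by_cases hb : b = b'
  · subst hb
    exact ⟨hinj (by linear_combination h), rfl⟩
  · exfalso
    apply hωF ((a - a') / (b' - b))
    have hbb : algebraMap F K (b' - b) ≠ 0 := fun hc =>
      hb (sub_eq_zero.mp (hinj (by simpa using hc))).symm
    rw [map_div₀, map_sub, map_sub]
    rw [map_sub] at hbb
    field_simp
    linear_combination -h

lemma coord_exists [FiniteDimensional F K] (hK : Module.finrank F K = 2)
    {ω : K} (hωF : ∀ a : F, ω ≠ algebraMap F K a) (z : K) :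
    ∃ a b : F, z = algebraMap F K a + algebraMap F K b * ω := by
  have hli : LinearIndependent F ![1, ω] := by
    rw [LinearIndependent.pair_iff]
    intro s t hst
    rw [Algebra.smul_def, Algebra.smul_def, mul_one] at hst
    by_cases ht : t = 0
    · subst ht
      refine ⟨(algebraMap F K).injective (by simpa using hst), rfl⟩
    · exfalso
      apply hωF (-s / t)
      have htk : algebraMap F K t ≠ 0 := fun hc =>
        ht ((algebraMap F K).injective (by simpa using hc))
      rw [map_div₀, map_neg]
      field_simp
      linear_combination hst
  have hsp : Submodule.span F (Set.range ![1, ω]) = ⊤ := by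
    apply Submodule.eq_top_of_finrank_eq
    rw [finrank_span_eq_card hli]
    simp [hK]
  have hz : z ∈ Submodule.span F {1, ω} := by
    have : Set.range ![1, ω] = {1, ω} := by
      simp [Matrix.range_cons, Matrix.range_empty, Set.pair_comm]
    rw [← this, hsp]; trivial
  obtain ⟨a, b, hab⟩ := Submodule.mem_span_pair.mp hz
  exact ⟨a, b, by rw [← hab, Algebra.smul_def, Algebra.smul_def, mul_one]⟩

lemma sigma_fix {σ : K ≃ₐ[F] K} [FiniteDimensional F K] (hK : Module.finrank F K = 2)
    (hσ : σ ≠ AlgEquiv.refl) {s : K} (hsF : ∀ a : F, s ≠ algebraMap F K a)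
    (h : σ s = s) : False := by
  apply hσ
  ext z
  obtain ⟨a, b, rfl⟩ := coord_exists hK hsF z
  simp [h]
end Quad

section FI
variable {F : Type*} [Field F] [NumberField F]

lemma fi_add_mem {I : FractionalIdeal (nonZeroDivisors (𝓞 F)) F} {x y : F}
    (hx : x ∈ I) (hy : y ∈ I) : x + y ∈ I :=
  FractionalIdeal.mem_coe.mp
    (Submodule.add_mem _ (FractionalIdeal.mem_coe.mpr hx) (FractionalIdeal.mem_coe.mpr hy))

lemma fi_neg_mem {I : FractionalIdeal (nonZeroDivisors (𝓞 F)) F} {x : F}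
    (hx : x ∈ I) : -x ∈ I :=
  FractionalIdeal.mem_coe.mp (Submodule.neg_mem _ (FractionalIdeal.mem_coe.mpr hx))

lemma fi_sub_mem {I : FractionalIdeal (nonZeroDivisors (𝓞 F)) F} {x y : F}
    (hx : x ∈ I) (hy : y ∈ I) : x - y ∈ I := by
  rw [sub_eq_add_neg]; exact fi_add_mem hx (fi_neg_mem hy)

lemma fi_smul_mem {I : FractionalIdeal (nonZeroDivisors (𝓞 F)) F} (c : 𝓞 F) {x : F}
    (hx : x ∈ I) : algebraMap (𝓞 F) F c * x ∈ I := by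
  rw [← Algebra.smul_def]
  exact FractionalIdeal.mem_coe.mp (Submodule.smul_mem _ c (FractionalIdeal.mem_coe.mpr hx))

lemma fi_zero_mem (I : FractionalIdeal (nonZeroDivisors (𝓞 F)) F) : (0 : F) ∈ I :=
  FractionalIdeal.mem_coe.mp (Submodule.zero_mem _)

lemma mem_mul_inv_inv {𝔞 B : FractionalIdeal (nonZeroDivisors (𝓞 F)) F} (h𝔞 : 𝔞 ≠ 0) {x : F}
    (h : ∀ α ∈ 𝔞, ∀ β ∈ 𝔞, x * α * β ∈ B) : x ∈ B * 𝔞⁻¹ * 𝔞⁻¹ := by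
  have key : x ∈ B / (𝔞 * 𝔞) := by
    rw [FractionalIdeal.mem_div_iff_of_ne_zero (mul_ne_zero h𝔞 h𝔞)]
    intro y hy
    have hy' : y ∈ (𝔞 : Submodule (𝓞 F) F) * (𝔞 : Submodule (𝓞 F) F) := by
      rw [← FractionalIdeal.coe_mul]; exact hy
    refine Submodule.mul_induction_on hy' (fun m hm n hn => ?_) (fun a b ha hb => ?_)
    · have := h m hm n hn
      rwa [show x * (m * n) = x * m * n by ring]
    · rw [mul_add]; exact fi_add_mem ha hb
  rwa [div_eq_mul_inv, _root_.mul_inv, ← mul_assoc] at key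

lemma mem_of_eq {I J : FractionalIdeal (nonZeroDivisors (𝓞 F)) F} {x : F}
    (hx : x ∈ I) (h : I = J) : x ∈ J := h ▸ hx

lemma mem_of_factor {x : F} {T G H : FractionalIdeal (nonZeroDivisors (𝓞 F)) F}
    (hx : x ∈ T) (hT : T = G * H) (hH : H ≤ 1) : x ∈ G := by
  have hle : T ≤ G := by
    rw [hT]
    calc G * H ≤ G * 1 := by gcongr
      _ = G := mul_one G
  exact hle hx

theorem isDisc_iff {K : Type*} [Field K] [Algebra F K]
    [FiniteDimensional F K] (hK : Module.finrank F K = 2)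
    (σ : K ≃ₐ[F] K) (hσ : σ ≠ AlgEquiv.refl)
    {ξ : F} (hξ0 : ξ ≠ 0) (hξns : ∀ m : F, ξ ≠ m ^ 2)
    (hsqrt : ∃ s : K, s ^ 2 = algebraMap F K ξ)
    {𝔞 : FractionalIdeal (nonZeroDivisors (𝓞 F)) F} (h𝔞 : 𝔞 ≠ 0) :
    IsDisc F σ ξ 𝔞 ↔ ∃ t ∈ 𝔞⁻¹, ∃ n ∈ 𝔞⁻¹ * 𝔞⁻¹, ξ = t ^ 2 - 4 * n := by
  have hinj := (algebraMap F K).injective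
  set C := algebraMap F K with hC
  constructor
  · rintro ⟨ω, hω, S, hS⟩
    have hσω : σ ω ≠ ω := by
      intro h
      apply hξ0
      apply hinj
      rw [map_zero, ← hω, h]
      ring
    have hωF : ∀ a : F, ω ≠ C a := by
      rintro a rfl
      exact hσω (σ.commutes a)
    obtain ⟨x, y, hxy⟩ := coord_exists hK hωF (ω ^ 2)
    have happly : (σ ω) ^ 2 = C x + C y * σ ω := by
      have := congrArg σ hxy
      simpa using this
    have htr : ω + σ ω = C y := by
      have hne : ω - σ ω ≠ 0 := sub_ne_zero.mpr (fun h => hσω h.symm)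
      apply mul_right_cancel₀ hne
      linear_combination hxy - happly
    have hnorm : ω * σ ω = -C x := by
      linear_combination ω * htr - hxy
    have key : ∀ α ∈ 𝔞, ∀ β ∈ 𝔞,
        α * β * x ∈ (1 : FractionalIdeal (nonZeroDivisors (𝓞 F)) F) ∧ α * β * y ∈ 𝔞 := by
      intro α hα β hβ
      have hαω : C α * ω ∈ S := by
        rw [← SetLike.mem_coe, hS]
        exact ⟨0, α, hα, by simp [hC]⟩
      have hβω : C β * ω ∈ S := by
        rw [← SetLike.mem_coe, hS]
        exact ⟨0, β, hβ, by simp [hC]⟩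
      have hprod := S.mul_mem hαω hβω
      rw [← SetLike.mem_coe, hS] at hprod
      obtain ⟨c, γ, hγ, heq⟩ := hprod
      have hexp : C (α * β * x) + C (α * β * y) * ω
          = C (algebraMap (𝓞 F) F c) + C γ * ω := by
        rw [← heq]
        simp only [_root_.map_mul]
        linear_combination (-(C α * C β)) * hxy
      obtain ⟨h1, h2⟩ := coord_unique hωF hexp
      exact ⟨(FractionalIdeal.mem_one_iff _).mpr ⟨c, h1.symm⟩, h2 ▸ hγ⟩
    have hymem : y ∈ 𝔞⁻¹ := by
      have := mem_mul_inv_inv h𝔞 (fun α hα β hβ => by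
        rw [show y * α * β = α * β * y by ring]; exact (key α hα β hβ).2)
      rwa [mul_inv_cancel₀ h𝔞, one_mul] at this
    have hxmem : -x ∈ 𝔞⁻¹ * 𝔞⁻¹ := by
      have := mem_mul_inv_inv h𝔞 (fun α hα β hβ => by
        rw [show x * α * β = α * β * x by ring]; exact (key α hα β hβ).1)
      rw [one_mul] at this
      exact fi_neg_mem this
    refine ⟨y, hymem, -x, hxmem, ?_⟩
    apply hinj
    simp only [_root_.map_sub, _root_.map_mul, _root_.map_pow, map_neg, map_ofNat]
    linear_combination -hω + (ω + σ ω + C y) * htr - 4 * hnorm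
  · rintro ⟨t, ht, n, hn, hξ⟩
    obtain ⟨s, hs⟩ := hsqrt
    have : CharZero K := charZero_of_injective_algebraMap hinj
    have hsF : ∀ a : F, s ≠ C a := by
      rintro a rfl
      exact hξns a (hinj (by rw [← hs, ← map_pow]))
    have hσs : σ s = -s := by
      have h2 : (σ s) ^ 2 = s ^ 2 := by rw [← map_pow, hs, σ.commutes]
      have h3 : (σ s - s) * (σ s + s) = 0 := by linear_combination h2
      rcases mul_eq_zero.mp h3 with h | h
      · exact absurd (sub_eq_zero.mp h) (fun hh => (sigma_fix hK hσ hsF hh).elim)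
      · exact eq_neg_of_add_eq_zero_left h
    set ω : K := (C t + s) / 2 with hωdef
    have h2K : (2 : K) ≠ 0 := two_ne_zero
    have hωs : ω - σ ω = s := by
      have hσω : σ ω = (C t - s) / 2 := by
        rw [hωdef, map_div₀, _root_.map_add, σ.commutes, hσs]
        rw [show σ (2 : K) = 2 from map_ofNat σ 2]
        ring
      rw [hσω, hωdef]
      field_simp
      ring
    have hCξ : C ξ = C t ^ 2 - 4 * C n := by
      rw [hξ, _root_.map_sub, _root_.map_pow, _root_.map_mul, map_ofNat]
    have hω2 : ω ^ 2 = C t * ω - C n := by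
      rw [hωdef]
      field_simp
      linear_combination hs + hCξ
    refine ⟨ω, by rw [hωs]; exact hs, ?_⟩
    refine ⟨{ carrier := orderSet F 𝔞 ω
              zero_mem' := ⟨0, 0, fi_zero_mem 𝔞, by simp⟩
              one_mem' := ⟨1, 0, fi_zero_mem 𝔞, by simp⟩
              add_mem' := fun {a b} ha hb => ?hadd
              neg_mem' := fun {a} ha => ?hneg
              mul_mem' := fun {a b} ha hb => ?hmul }, rfl⟩
    case hadd =>
      obtain ⟨c, α, hα, rfl⟩ := ha
      obtain ⟨d, β, hβ, rfl⟩ := hb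
      exact ⟨c + d, α + β, fi_add_mem hα hβ, by simp only [_root_.map_add]; ring⟩
    case hneg =>
      obtain ⟨c, α, hα, rfl⟩ := ha
      exact ⟨-c, -α, fi_neg_mem hα, by simp only [map_neg]; ring⟩
    case hmul =>
      obtain ⟨c, α, hα, rfl⟩ := ha
      obtain ⟨d, β, hβ, rfl⟩ := hb
      have h1 : algebraMap (𝓞 F) F c * algebraMap (𝓞 F) F d - α * β * n
          ∈ (1 : FractionalIdeal (nonZeroDivisors (𝓞 F)) F) := by
        refine fi_sub_mem ((FractionalIdeal.mem_one_iff _).mpr ⟨c * d, by rw [_root_.map_mul]⟩) ?_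
        have hmm := FractionalIdeal.mul_mem_mul (FractionalIdeal.mul_mem_mul hα hβ) hn
        refine mem_of_eq hmm ?_
        rw [mul_mul_mul_comm, mul_inv_cancel₀ h𝔞, one_mul]
      obtain ⟨e, he⟩ := (FractionalIdeal.mem_one_iff _).mp h1
      have h2 : algebraMap (𝓞 F) F c * β + algebraMap (𝓞 F) F d * α + α * β * t ∈ 𝔞 := by
        refine fi_add_mem (fi_add_mem (fi_smul_mem c hβ) (fi_smul_mem d hα)) ?_
        have hmm := FractionalIdeal.mul_mem_mul (FractionalIdeal.mul_mem_mul hα hβ) ht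
        refine mem_of_eq hmm ?_
        rw [mul_assoc, mul_inv_cancel₀ h𝔞, mul_one]
      refine ⟨e, _, h2, ?_⟩
      rw [he]
      simp only [_root_.map_sub, _root_.map_add, _root_.map_mul]
      linear_combination (C α * C β) * hω2
end FI
/-- `(D,𝔞)` is a discriminant iff `(Δ,𝔠) = (lD, 𝔞𝔟)` is a discriminant. -/
theorem statement_0
    (F : Type*) [Field F] [NumberField F]
    (htr : ∀ φ : F →+* ℂ, ∀ x : F, (φ x).im = 0)
    (Kl : Type*) [Field Kl] [Algebra F Kl] [Algebra (𝓞 F) Kl] [IsScalarTower (𝓞 F) F Kl]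
    [FiniteDimensional F Kl] (hKl : Module.finrank F Kl = 2)
    (σl : Kl ≃ₐ[F] Kl) (hσl : σl ≠ AlgEquiv.refl)
    (KD : Type*) [Field KD] [Algebra F KD]
    [FiniteDimensional F KD] (hKD : Module.finrank F KD = 2)
    (σD : KD ≃ₐ[F] KD) (hσD : σD ≠ AlgEquiv.refl)
    (KΔ : Type*) [Field KΔ] [Algebra F KΔ]
    [FiniteDimensional F KΔ] (hKΔ : Module.finrank F KΔ = 2)
    (σΔ : KΔ ≃ₐ[F] KΔ) (hσΔ : σΔ ≠ AlgEquiv.refl)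
    (l D : F) (hl0 : l ≠ 0) (hlns : ∀ m : F, l ≠ m ^ 2)
    (hD0 : D ≠ 0) (hDns : ∀ m : F, D ≠ m ^ 2)
    (hsqrtl : ∃ s : Kl, s ^ 2 = algebraMap F Kl l)
    (hsqrtD : ∃ s : KD, s ^ 2 = algebraMap F KD D)
    (hsqrtΔ : ∃ s : KΔ, s ^ 2 = algebraMap F KΔ (l * D))
    (𝔞 𝔟 : FractionalIdeal (nonZeroDivisors (𝓞 F)) F) (h𝔞0 : 𝔞 ≠ 0) (h𝔟0 : 𝔟 ≠ 0)
    (hfund : IsFundDisc F σl l 𝔟)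
    (hint : ∃ I : Ideal (𝓞 F),
      (I : FractionalIdeal (nonZeroDivisors (𝓞 F)) F)
          = FractionalIdeal.spanSingleton (nonZeroDivisors (𝓞 F)) l * 𝔟 ^ 2 ∧
        IsCoprime I (Ideal.span {(2 : 𝓞 F)}))
    (hneg : ∀ τ : F →+* ℝ, τ (l * D) < 0)
    (hmem : D ∈ 𝔞⁻¹ * 𝔞⁻¹) :
    IsDisc F σD D 𝔞 ↔ IsDisc F σΔ (l * D) (𝔞 * 𝔟) := by
  classical
  -- l*D is not a square, thanks to a real embedding
  have hnsΔ : ∀ m : F, l * D ≠ m ^ 2 := by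
    have hcard : 0 < Fintype.card (F →+* ℂ) := by
      rw [NumberField.Embeddings.card F ℂ]
      exact Module.finrank_pos
    obtain ⟨φ⟩ := Fintype.card_pos_iff.mp hcard
    intro m hm
    let τ : F →+* ℝ :=
      { toFun := fun x => (φ x).re
        map_one' := by simp
        map_mul' := fun x y => by simp [Complex.mul_re, htr]
        map_zero' := by simp
        map_add' := fun x y => by simp }
    have h1 := hneg τ
    have h2 : τ (l * D) = τ m ^ 2 := by rw [hm, map_pow]
    nlinarith [sq_nonneg (τ m)]
  have hΔ0 : l * D ≠ 0 := mul_ne_zero hl0 hD0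
  have h𝔠0 : 𝔞 * 𝔟 ≠ 0 := mul_ne_zero h𝔞0 h𝔟0
  -- extract data from the fundamental discriminant (l, 𝔟)
  have hldisc : IsDisc F σl l 𝔟 := by
    obtain ⟨ω, h1, S, h2, _⟩ := hfund
    exact ⟨ω, h1, S, h2⟩
  obtain ⟨sl, hsl, m, hm, hlsm⟩ := (isDisc_iff hKl σl hσl hl0 hlns hsqrtl h𝔟0).mp hldisc
  rw [isDisc_iff hKD σD hσD hD0 hDns hsqrtD h𝔞0,
      isDisc_iff hKΔ σΔ hσΔ hΔ0 hnsΔ hsqrtΔ h𝔠0]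
  constructor
  · rintro ⟨t, ht, n, hn, hD⟩
    refine ⟨sl * t, ?_, sl ^ 2 * n + m * t ^ 2 - 4 * (m * n), ?_, by rw [hlsm, hD]; ring⟩
    · refine mem_of_eq (FractionalIdeal.mul_mem_mul hsl ht) ?_
      rw [_root_.mul_inv, mul_comm]
    · have h1 : sl ^ 2 * n ∈ 𝔟⁻¹ * 𝔟⁻¹ * (𝔞⁻¹ * 𝔞⁻¹) := by
        rw [pow_two]
        exact FractionalIdeal.mul_mem_mul (FractionalIdeal.mul_mem_mul hsl hsl) hn
      have h2 : m * t ^ 2 ∈ 𝔟⁻¹ * 𝔟⁻¹ * (𝔞⁻¹ * 𝔞⁻¹) := by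
        rw [pow_two]
        exact FractionalIdeal.mul_mem_mul hm (FractionalIdeal.mul_mem_mul ht ht)
      have h3 : 4 * (m * n) ∈ 𝔟⁻¹ * 𝔟⁻¹ * (𝔞⁻¹ * 𝔞⁻¹) := by
        have h4 : (4 : F) = algebraMap (𝓞 F) F 4 := (map_ofNat _ 4).symm
        rw [h4]
        exact fi_smul_mem 4 (FractionalIdeal.mul_mem_mul hm hn)
      refine mem_of_eq (fi_sub_mem (fi_add_mem h1 h2) h3) ?_
      rw [_root_.mul_inv]
      ring
  · rintro ⟨U, hU, V, hV, hΔeq⟩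
    obtain ⟨I, hIc, hIcop⟩ := hint
    have h𝔦le : FractionalIdeal.spanSingleton (nonZeroDivisors (𝓞 F)) l * 𝔟 ^ 2 ≤ 1 :=
      hIc ▸ FractionalIdeal.coeIdeal_le_one
    have hsl0 : FractionalIdeal.spanSingleton (nonZeroDivisors (𝓞 F)) l ≠ 0 :=
      FractionalIdeal.spanSingleton_ne_zero_iff.mpr hl0
    have hle_mul : ∀ J J' : FractionalIdeal (nonZeroDivisors (𝓞 F)) F,
        J ≤ 1 → J' ≤ 1 → J * J' ≤ 1 := fun J J' h h' => by
      calc J * J' ≤ J * 1 := by gcongr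
        _ = J := mul_one J
        _ ≤ 1 := h
    -- coprimality: 1 = i + 4 r with i ∈ I²
    have hcop2 : IsCoprime (I ^ 2) (Ideal.span {(2 : 𝓞 F)} ^ 2) := hIcop.pow
    have hsum : I ^ 2 + Ideal.span {(4 : 𝓞 F)} = ⊤ := by
      have h5 := Ideal.isCoprime_iff_add.mp hcop2
      rwa [Ideal.span_singleton_pow, show (2 : 𝓞 F) ^ 2 = 4 by norm_num, Ideal.one_eq_top] at h5
    have h1top : (1 : 𝓞 F) ∈ I ^ 2 ⊔ Ideal.span {(4 : 𝓞 F)} := by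
      rw [show I ^ 2 ⊔ Ideal.span {(4 : 𝓞 F)} = I ^ 2 + Ideal.span {(4 : 𝓞 F)} from rfl, hsum]
      trivial
    obtain ⟨i, hi, z, hz, hiz⟩ := Submodule.mem_sup.mp h1top
    obtain ⟨r, hr⟩ := Ideal.mem_span_singleton'.mp hz
    have hir : algebraMap (𝓞 F) F i + 4 * algebraMap (𝓞 F) F r = 1 := by
      have h6 : i + 4 * r = 1 := by rw [← hiz, ← hr]; ring
      have := congrArg (algebraMap (𝓞 F) F) h6
      have h4 : (algebraMap (𝓞 F) F) 4 = 4 := map_ofNat _ 4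
      simpa [h4] using this
    set iF := algebraMap (𝓞 F) F i with hiFdef
    set rF := algebraMap (𝓞 F) F r with hrFdef
    have hiF2 : iF ∈ (FractionalIdeal.spanSingleton (nonZeroDivisors (𝓞 F)) l * 𝔟 ^ 2) ^ 2 := by
      rw [← hIc, ← FractionalIdeal.coeIdeal_pow]
      exact (FractionalIdeal.mem_coeIdeal _).mpr ⟨i, hi, rfl⟩
    have hlinv : l⁻¹ ∈ (FractionalIdeal.spanSingleton (nonZeroDivisors (𝓞 F)) l)⁻¹ := by
      rw [FractionalIdeal.spanSingleton_inv]
      exact FractionalIdeal.mem_spanSingleton_self _ _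
    refine ⟨U * sl * iF * l⁻¹, ?_,
      -((rF + rF * iF) * D) + V * (iF * iF) * l⁻¹ + m * (U * U) * (iF * iF) * (l⁻¹ * l⁻¹),
      ?_, ?_⟩
    · have hT := FractionalIdeal.mul_mem_mul
        (FractionalIdeal.mul_mem_mul (FractionalIdeal.mul_mem_mul hU hsl) hiF2) hlinv
      refine mem_of_factor hT ?_ h𝔦le
      field_simp
    · have m1 : -((rF + rF * iF) * D) ∈ 𝔞⁻¹ * 𝔞⁻¹ := by
        rw [show rF + rF * iF = algebraMap (𝓞 F) F (r + r * i) by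
          rw [map_add, _root_.map_mul]]
        exact fi_neg_mem (fi_smul_mem _ hmem)
      have m2 : V * (iF * iF) * l⁻¹ ∈ 𝔞⁻¹ * 𝔞⁻¹ := by
        have hT := FractionalIdeal.mul_mem_mul
          (FractionalIdeal.mul_mem_mul hV (FractionalIdeal.mul_mem_mul hiF2 hiF2)) hlinv
        refine mem_of_factor hT ?_
          (hle_mul _ _ h𝔦le (hle_mul _ _ h𝔦le h𝔦le))
        field_simp
      have m3 : m * (U * U) * (iF * iF) * (l⁻¹ * l⁻¹) ∈ 𝔞⁻¹ * 𝔞⁻¹ := by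
        have hT := FractionalIdeal.mul_mem_mul
          (FractionalIdeal.mul_mem_mul
            (FractionalIdeal.mul_mem_mul hm (FractionalIdeal.mul_mem_mul hU hU))
            (FractionalIdeal.mul_mem_mul hiF2 hiF2))
          (FractionalIdeal.mul_mem_mul hlinv hlinv)
        refine mem_of_factor hT ?_ (hle_mul _ _ h𝔦le h𝔦le)
        field_simp
      exact fi_add_mem (fi_add_mem m1 m2) m3
    · have hR0 : l * l⁻¹ = 1 := mul_inv_cancel₀ hl0
      linear_combination (U * U * iF * iF * l⁻¹ * l⁻¹) * hlsm
        + (iF * iF * l⁻¹ * l⁻¹ * l) * hΔeq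
        + (-D * (iF + 1)) * hir
        + (-(iF * iF) * D * (l * l⁻¹ + 1) - 4 * V * iF * iF * l⁻¹) * hR0
end

section
/- Let l ∈ F^× \ (F^×)² and 𝔟 a fractional ideal of F be such that (l,𝔟) is a fundamental discriminant and such that l𝔟² is an integral ideal of 𝒪 coprime to 2𝒪. Let D ∈ F^× \ (F^×)² be such that τ(lD) < 0 for every real embedding τ of F, and let 𝔞 be a fractional ideal of F with D ∈ 𝔞⁻². Set Δ = lD and 𝔠 = 𝔞𝔟. Assume moreover that the integral ideals D𝔞² and l𝔟² are coprime. Then (D,𝔞) is a fundamental discriminant if and only if (Δ,𝔠) is a fundamental discriminant. -/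
open NumberField

section QFAEverything
open NumberField FractionalIdeal

noncomputable section QFAux

variable {F : Type*} [Field F] [NumberField F]

/-- Shorthand for the fractional ideals of `F`. -/
abbrev QFrac (F : Type*) [Field F] [NumberField F] := FractionalIdeal (nonZeroDivisors (𝓞 F)) F

lemma QF.isIntegral_of_quad {R S : Type*} [CommRing R] [Nontrivial R] [CommRing S] [Algebra R S]
    (x : S) (r1 r0 : R) (h : x ^ 2 + algebraMap R S r1 * x + algebraMap R S r0 = 0) :
    IsIntegral R x := by
  refine ⟨Polynomial.X ^ 2 + Polynomial.C r1 * Polynomial.X + Polynomial.C r0, ?_, ?_⟩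
  · rw [add_assoc]
    apply Polynomial.Monic.add_of_left (Polynomial.monic_X_pow 2)
    apply lt_of_le_of_lt (Polynomial.degree_add_le _ _)
    rw [Polynomial.degree_X_pow]
    refine max_lt ?_ ?_
    · exact lt_of_le_of_lt (Polynomial.degree_C_mul_X_le _) (by norm_num)
    · exact (Polynomial.degree_C_le).trans_lt (by norm_num)
  · simpa [Polynomial.eval₂_add, Polynomial.eval₂_mul, Polynomial.eval₂_pow] using h

lemma QF.int_iff {x : F} : x ∈ (1 : QFrac F) ↔ ∃ r : 𝓞 F, algebraMap (𝓞 F) F r = x :=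
  FractionalIdeal.mem_one_iff _

lemma QF.int_algebraMap (r : 𝓞 F) : algebraMap (𝓞 F) F r ∈ (1 : QFrac F) :=
  QF.int_iff.mpr ⟨r, rfl⟩

lemma QF.int_one : (1 : F) ∈ (1 : QFrac F) := QF.int_iff.mpr ⟨1, map_one _⟩

lemma QF.int_add {x y : F} (hx : x ∈ (1 : QFrac F)) (hy : y ∈ (1 : QFrac F)) :
    x + y ∈ (1 : QFrac F) := by
  obtain ⟨r, rfl⟩ := QF.int_iff.mp hx
  obtain ⟨s, rfl⟩ := QF.int_iff.mp hy
  exact QF.int_iff.mpr ⟨r + s, map_add _ _ _⟩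

lemma QF.int_mul {x y : F} (hx : x ∈ (1 : QFrac F)) (hy : y ∈ (1 : QFrac F)) :
    x * y ∈ (1 : QFrac F) := by
  obtain ⟨r, rfl⟩ := QF.int_iff.mp hx
  obtain ⟨s, rfl⟩ := QF.int_iff.mp hy
  exact QF.int_iff.mpr ⟨r * s, map_mul _ _ _⟩

lemma QF.int_neg {x : F} (hx : x ∈ (1 : QFrac F)) : -x ∈ (1 : QFrac F) := by
  obtain ⟨r, rfl⟩ := QF.int_iff.mp hx
  exact QF.int_iff.mpr ⟨-r, map_neg _ _⟩

lemma QF.int_sub {x y : F} (hx : x ∈ (1 : QFrac F)) (hy : y ∈ (1 : QFrac F)) :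
    x - y ∈ (1 : QFrac F) := by
  rw [sub_eq_add_neg]; exact QF.int_add hx (QF.int_neg hy)

lemma QF.int_congr {x y : F} (hx : x ∈ (1 : QFrac F)) (h : x = y) : y ∈ (1 : QFrac F) := h ▸ hx

lemma QF.mem_congr {I : QFrac F} {x y : F} (hx : x ∈ I) (h : x = y) : y ∈ I := h ▸ hx

lemma QF.int_two : (2 : F) ∈ (1 : QFrac F) :=
  QF.int_iff.mpr ⟨2, by rw [map_ofNat]⟩

lemma QF.int_four : (4 : F) ∈ (1 : QFrac F) :=
  QF.int_iff.mpr ⟨4, by rw [map_ofNat]⟩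

/-- integral closedness: roots of monic quadratics with integral coefficients are integral -/
lemma QF.int_of_quad {x c1 c0 : F} (h1 : c1 ∈ (1 : QFrac F)) (h0 : c0 ∈ (1 : QFrac F))
    (h : x ^ 2 + c1 * x + c0 = 0) : x ∈ (1 : QFrac F) := by
  obtain ⟨r1, hr1⟩ := QF.int_iff.mp h1
  obtain ⟨r0, hr0⟩ := QF.int_iff.mp h0
  have : IsIntegral (𝓞 F) x := QF.isIntegral_of_quad x r1 r0 (by rw [hr1, hr0]; exact h)
  exact QF.int_iff.mpr (IsIntegrallyClosed.isIntegral_iff.mp this)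

/-- the "integral pair" condition: `u + v√ξ` is an algebraic integer. -/
def QNint (F : Type*) [Field F] [NumberField F] (ξ u v : F) : Prop :=
  2 * u ∈ (1 : QFrac F) ∧ u ^ 2 - ξ * v ^ 2 ∈ (1 : QFrac F)

/-- the fundamental-discriminant condition, reduced to `F`. -/
def QECond (F : Type*) [Field F] [NumberField F] (ξ : F) (𝔠 : QFrac F) (a : F) : Prop :=
  ∀ u v : F, (2 * v ∈ 𝔠 ∧ u - 2 * v * a ∈ (1 : QFrac F)) ↔ QNint F ξ u v

lemma QF.sub_int {ξ u u' v : F} (h : QNint F ξ u v) (h' : QNint F ξ u' v) :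
    u - u' ∈ (1 : QFrac F) := by
  refine QF.int_of_quad (c1 := 2 * u') (c0 := -((u^2 - ξ*v^2) - (u'^2 - ξ*v^2))) h'.1
    (QF.int_neg (QF.int_sub h.2 h'.2)) (by ring)

lemma QF.prod_nint {ξ u₁ v₁ u₂ v₂ : F} (h₁ : QNint F ξ u₁ v₁) (h₂ : QNint F ξ u₂ v₂) :
    QNint F ξ (u₁ * u₂ + ξ * v₁ * v₂) (u₁ * v₂ + u₂ * v₁) := by
  constructor
  · refine QF.int_of_quad (c1 := -((2*u₁)*(2*u₂)))
      (c0 := (2*u₁)^2 * (u₂^2 - ξ*v₂^2) + ((2*u₂)^2 - 4*(u₂^2 - ξ*v₂^2)) * (u₁^2 - ξ*v₁^2))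
      (QF.int_neg (QF.int_mul h₁.1 h₂.1))
      (QF.int_add (QF.int_mul (QF.int_congr (QF.int_mul h₁.1 h₁.1) (by ring : (2*u₁)*(2*u₁) = (2*u₁)^2)) h₂.2)
        (QF.int_mul (QF.int_sub (QF.int_congr (QF.int_mul h₂.1 h₂.1) (by ring)) (QF.int_mul QF.int_four h₂.2)) h₁.2))
      (by ring)
  · exact QF.int_congr (QF.int_mul h₁.2 h₂.2) (by ring)

end QFAux
noncomputable section QFAux2


variable {F : Type*} [Field F] [NumberField F]

lemma QF.two_ne (u : F) : (2:F) * (u/2) = u := by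
  field_simp

lemma QF.int_zero : (0 : F) ∈ (1 : QFrac F) := QF.int_iff.mpr ⟨0, map_zero _⟩

lemma QF.E_F1 {ξ a : F} {𝔠 : QFrac F} (hE : QECond F ξ 𝔠 a) {γ : F} (hγ : γ ∈ 𝔠) :
    2 * (a * γ) ∈ (1 : QFrac F) := by
  have h := (hE (a * γ) (γ / 2)).mp
    ⟨QF.mem_congr hγ (by field_simp), QF.int_congr QF.int_zero (by ring)⟩
  exact h.1

lemma QF.E_nint {ξ a : F} {𝔠 : QFrac F} (hE : QECond F ξ 𝔠 a) {γ : F} (hγ : γ ∈ 𝔠) :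
    QNint F ξ (a * γ) (γ / 2) :=
  (hE (a * γ) (γ / 2)).mp
    ⟨QF.mem_congr hγ (by field_simp), QF.int_congr QF.int_zero (by ring)⟩

lemma QF.E_e {ξ a : F} {𝔠 : QFrac F} (hE : QECond F ξ 𝔠 a) {γ γ' : F}
    (hγ : γ ∈ 𝔠) (hγ' : γ' ∈ 𝔠) : (a^2 - ξ/4) * (γ * γ') ∈ (1 : QFrac F) := by
  have hp := QF.prod_nint (QF.E_nint hE hγ) (QF.E_nint hE hγ')
  have h2 := ((hE _ _).mpr hp).2
  refine QF.int_congr (QF.int_neg h2) ?_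
  field_simp
  ring

lemma QF.E_M {ξ a : F} {𝔠 : QFrac F} (hE : QECond F ξ 𝔠 a) {u v : F}
    (h : QNint F ξ u v) : 2 * v ∈ 𝔠 := ((hE u v).mpr h).1

lemma QF.E_of {ξ a : F} {𝔠 : QFrac F}
    (hO1 : ∀ γ ∈ 𝔠, 2 * (a * γ) ∈ (1 : QFrac F))
    (hO2 : ∀ γ ∈ 𝔠, ∀ γ' ∈ 𝔠, (a^2 - ξ/4) * (γ * γ') ∈ (1 : QFrac F))
    (hM : ∀ u v : F, QNint F ξ u v → 2 * v ∈ 𝔠) : QECond F ξ 𝔠 a := by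
  intro u v
  constructor
  · rintro ⟨h2v, hw⟩
    constructor
    · exact QF.int_congr (QF.int_add (QF.int_mul QF.int_two hw) (hO1 _ h2v)) (by ring)
    · refine QF.int_congr (QF.int_add (QF.int_add (QF.int_mul hw hw)
        (QF.int_mul hw (hO1 _ h2v))) (hO2 _ h2v _ h2v)) ?_
      ring
  · intro h
    refine ⟨hM u v h, ?_⟩
    have hpair : QNint F ξ (2 * v * a) v := by
      constructor
      · exact QF.int_congr (hO1 _ (hM u v h)) (by ring)
      · exact QF.int_congr (hO2 _ (hM u v h) _ (hM u v h)) (by ring)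
    exact QF.sub_int h hpair

-- fractional ideal helpers
lemma QF.smul_mem {I : QFrac F} {x : F} (z : 𝓞 F) (hx : x ∈ I) : z • x ∈ I := by
  rw [← FractionalIdeal.mem_coe] at hx ⊢
  exact Submodule.smul_mem _ z hx

lemma QF.span_mul_le {x : F} {I J : QFrac F}
    (h : ∀ p ∈ I, x * p ∈ J) :
    spanSingleton (nonZeroDivisors (𝓞 F)) x * I ≤ J := by
  rw [FractionalIdeal.mul_le]
  intro i hi p hp
  obtain ⟨z, rfl⟩ := (FractionalIdeal.mem_spanSingleton _).mp hi
  rw [smul_mul_assoc]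
  exact QF.smul_mem z (h p hp)

lemma QF.elem_of_span_mul {x : F} {I J : QFrac F}
    (h : spanSingleton (nonZeroDivisors (𝓞 F)) x * I ≤ J) {p : F} (hp : p ∈ I) :
    x * p ∈ J :=
  h (FractionalIdeal.mul_mem_mul (FractionalIdeal.mem_spanSingleton_self _ _) hp)

lemma QF.mem_mul_elim {I J : QFrac F} {p : F} (hp : p ∈ I * J) {C : F → Prop}
    (hgen : ∀ i ∈ I, ∀ j ∈ J, C (i * j)) (hadd : ∀ a b, C a → C b → C (a + b)) : C p := by
  rw [← FractionalIdeal.mem_coe, FractionalIdeal.coe_mul] at hp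
  exact Submodule.mul_induction_on hp
    (fun m hm n hn => hgen m (FractionalIdeal.mem_coe.mp hm) n (FractionalIdeal.mem_coe.mp hn))
    hadd

lemma QF.mul_le_mul' {I J I' J' : QFrac F} (h : I ≤ I') (h' : J ≤ J') : I * J ≤ I' * J' := by
  rw [FractionalIdeal.mul_le]
  exact fun i hi j hj => FractionalIdeal.mul_mem_mul (h hi) (h' hj)

end QFAux2

section QFMain

variable {F : Type*} [Field F] [NumberField F]

lemma QF.madd {I : QFrac F} {x y : F} (hx : x ∈ I) (hy : y ∈ I) : x + y ∈ I := by
  rw [← FractionalIdeal.mem_coe] at hx hy ⊢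
  exact Submodule.add_mem _ hx hy

theorem QF.main (l D b : F) (𝔞 𝔟 : QFrac F) (h𝔟0 : 𝔟 ≠ 0)
    (hEb : QECond F l 𝔟 b)
    (hintl : ∀ β ∈ 𝔟, ∀ β' ∈ 𝔟, l * (β * β') ∈ (1 : QFrac F))
    (hDaa : ∀ α ∈ 𝔞, ∀ α' ∈ 𝔞, D * (α * α') ∈ (1 : QFrac F))
    (hodd : ∃ t : F, ∃ μ : 𝓞 F, t ∈ 𝔟 * 𝔟 ∧ l * t = 1 - 2 * algebraMap (𝓞 F) F μ)
    (hbez : ∃ p q : F, p ∈ spanSingleton (nonZeroDivisors (𝓞 F)) D * (𝔞 * 𝔞) ∧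
      q ∈ spanSingleton (nonZeroDivisors (𝓞 F)) l * (𝔟 * 𝔟) ∧ p + q = 1) :
    (∃ a, QECond F D 𝔞 a) ↔ (∃ c, QECond F (l * D) (𝔞 * 𝔟) c) := by
  constructor
  · rintro ⟨a, hEa⟩
    refine ⟨2 * a * b, QF.E_of ?_ ?_ ?_⟩
    · -- O1
      intro γ hγ
      refine QF.mem_mul_elim hγ (C := fun p => 2 * (2 * a * b * p) ∈ (1 : QFrac F)) ?_ ?_
      · intro α hα β hβ
        exact QF.int_congr (QF.int_mul (QF.E_F1 hEa hα) (QF.E_F1 hEb hβ)) (by ring)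
      · intro x y hx hy
        exact QF.int_congr (QF.int_add hx hy) (by ring)
    · -- O2
      intro γ hγ γ' hγ'
      refine QF.mem_mul_elim hγ
        (C := fun p => ((2*a*b)^2 - l*D/4) * (p * γ') ∈ (1 : QFrac F)) ?_ ?_
      · intro α hα β hβ
        refine QF.mem_mul_elim hγ'
          (C := fun p' => ((2*a*b)^2 - l*D/4) * ((α*β) * p') ∈ (1 : QFrac F)) ?_ ?_
        · intro α' hα' β' hβ'
          have h1 := QF.int_mul (hDaa α hα α' hα') (QF.E_e hEb hβ hβ')
          have h2 := QF.int_mul (hintl β hβ β' hβ') (QF.E_e hEa hα hα')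
          have h3 := QF.int_mul QF.int_four
            (QF.int_mul (QF.E_e hEa hα hα') (QF.E_e hEb hβ hβ'))
          refine QF.int_congr (QF.int_add (QF.int_add h1 h2) h3) ?_
          ring
        · intro x y hx hy
          exact QF.int_congr (QF.int_add hx hy) (by ring)
      · intro x y hx hy
        exact QF.int_congr (QF.int_add hx hy) (by ring)
    · -- M
      intro u v hN
      have key1 : ∀ α ∈ 𝔞, (2*v*D) * α ∈ 𝔟 := by
        intro α hα
        have hn : QNint F l ((2*u)*(a*α)) (v*(D*α)) := by
          constructor
          · exact QF.int_congr (QF.int_mul hN.1 (QF.E_F1 hEa hα)) (by ring)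
          · refine QF.int_congr (QF.int_add
              (QF.int_mul (QF.int_mul hN.1 hN.1) (QF.E_e hEa hα hα))
              (QF.int_mul (QF.int_sub
                (QF.int_mul (QF.E_F1 hEa hα) (QF.E_F1 hEa hα))
                (QF.int_mul QF.int_four (QF.E_e hEa hα hα))) hN.2)) ?_
            ring
        exact QF.mem_congr (QF.E_M hEb hn) (by ring)
      have key2 : ∀ β ∈ 𝔟, (2*v*l) * β ∈ 𝔞 := by
        intro β hβ
        have hn : QNint F D ((2*u)*(b*β)) (v*(l*β)) := by
          constructor
          · exact QF.int_congr (QF.int_mul hN.1 (QF.E_F1 hEb hβ)) (by ring)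
          · refine QF.int_congr (QF.int_add
              (QF.int_mul (QF.int_mul hN.1 hN.1) (QF.E_e hEb hβ hβ))
              (QF.int_mul (QF.int_sub
                (QF.int_mul (QF.E_F1 hEb hβ) (QF.E_F1 hEb hβ))
                (QF.int_mul QF.int_four (QF.E_e hEb hβ hβ))) hN.2)) ?_
            ring
        exact QF.mem_congr (QF.E_M hEa hn) (by ring)
      obtain ⟨p, q, hp, hq, hpq⟩ := hbez
      have s1 : spanSingleton (nonZeroDivisors (𝓞 F)) (2*v*D) * 𝔞 ≤ 𝔟 :=
        QF.span_mul_le key1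
      have s2 : spanSingleton (nonZeroDivisors (𝓞 F)) (2*v*l) * 𝔟 ≤ 𝔞 :=
        QF.span_mul_le key2
      have c1 : spanSingleton (nonZeroDivisors (𝓞 F)) (2*v) *
          (spanSingleton (nonZeroDivisors (𝓞 F)) D * (𝔞 * 𝔞)) ≤ 𝔞 * 𝔟 := by
        calc spanSingleton (nonZeroDivisors (𝓞 F)) (2*v) *
              (spanSingleton (nonZeroDivisors (𝓞 F)) D * (𝔞 * 𝔞))
            = (spanSingleton (nonZeroDivisors (𝓞 F)) (2*v) *
                spanSingleton (nonZeroDivisors (𝓞 F)) D) * 𝔞 * 𝔞 := by ring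
          _ = spanSingleton (nonZeroDivisors (𝓞 F)) (2*v*D) * 𝔞 * 𝔞 := by
              rw [FractionalIdeal.spanSingleton_mul_spanSingleton]
          _ ≤ 𝔟 * 𝔞 := QF.mul_le_mul' s1 le_rfl
          _ = 𝔞 * 𝔟 := mul_comm _ _
      have c2 : spanSingleton (nonZeroDivisors (𝓞 F)) (2*v) *
          (spanSingleton (nonZeroDivisors (𝓞 F)) l * (𝔟 * 𝔟)) ≤ 𝔞 * 𝔟 := by
        calc spanSingleton (nonZeroDivisors (𝓞 F)) (2*v) *
              (spanSingleton (nonZeroDivisors (𝓞 F)) l * (𝔟 * 𝔟))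
            = (spanSingleton (nonZeroDivisors (𝓞 F)) (2*v) *
                spanSingleton (nonZeroDivisors (𝓞 F)) l) * 𝔟 * 𝔟 := by ring
          _ = spanSingleton (nonZeroDivisors (𝓞 F)) (2*v*l) * 𝔟 * 𝔟 := by
              rw [FractionalIdeal.spanSingleton_mul_spanSingleton]
          _ ≤ 𝔞 * 𝔟 := QF.mul_le_mul' s2 le_rfl
      have m1 : (2*v) * p ∈ 𝔞 * 𝔟 :=
        c1 (FractionalIdeal.mul_mem_mul (FractionalIdeal.mem_spanSingleton_self _ _) hp)
      have m2 : (2*v) * q ∈ 𝔞 * 𝔟 :=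
        c2 (FractionalIdeal.mul_mem_mul (FractionalIdeal.mem_spanSingleton_self _ _) hq)
      have : 2*v = (2*v)*p + (2*v)*q := by rw [← mul_add, hpq, mul_one]
      rw [this]
      exact QF.madd m1 m2
  · rintro ⟨c, hEc⟩
    obtain ⟨t, μ, ht, hlt⟩ := hodd
    set m : F := algebraMap (𝓞 F) F μ with hm
    refine ⟨2 * b * c * t, QF.E_of ?_ ?_ ?_⟩
    · -- O1
      intro α hα
      refine QF.mem_mul_elim ht (C := fun s => 2 * (2*b*c*s * α) ∈ (1 : QFrac F)) ?_ ?_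
      · intro β hβ β' hβ'
        exact QF.int_congr (QF.int_mul (QF.E_F1 hEb hβ)
          (QF.E_F1 hEc (FractionalIdeal.mul_mem_mul hα hβ'))) (by ring)
      · intro x y hx hy
        exact QF.int_congr (QF.int_add hx hy) (by ring)
    · -- O2
      intro α hα α' hα'
      have T2 : ∀ x ∈ 𝔟 * 𝔟, ∀ y ∈ 𝔟 * 𝔟,
          l * ((c^2 - l*D/4) * (x*y)) * (α*α') ∈ (1 : QFrac F) := by
        intro x hx
        refine QF.mem_mul_elim hx (C := fun x => ∀ y ∈ 𝔟 * 𝔟,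
          l * ((c^2 - l*D/4) * (x*y)) * (α*α') ∈ (1 : QFrac F)) ?_ ?_
        · intro β hβ β' hβ' y hy
          refine QF.mem_mul_elim hy (C := fun y =>
            l * ((c^2 - l*D/4) * ((β*β')*y)) * (α*α') ∈ (1 : QFrac F)) ?_ ?_
          · intro β'' hβ'' β''' hβ'''
            refine QF.int_congr (QF.int_mul (hintl β' hβ' β''' hβ''')
              (QF.E_e hEc (FractionalIdeal.mul_mem_mul hα hβ)
                (FractionalIdeal.mul_mem_mul hα' hβ''))) ?_
            ring
          · intro x y hx hy
            exact QF.int_congr (QF.int_add hx hy) (by ring)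
        · intro x y hx hy
          intro z hz
          exact QF.int_congr (QF.int_add (hx z hz) (hy z hz)) (by ring)
      have T3 : ∀ x ∈ 𝔟 * 𝔟, ∀ y ∈ 𝔟 * 𝔟,
          l * D * ((b^2 - l/4) * (x*y)) * (α*α') ∈ (1 : QFrac F) := by
        intro x hx
        refine QF.mem_mul_elim hx (C := fun x => ∀ y ∈ 𝔟 * 𝔟,
          l * D * ((b^2 - l/4) * (x*y)) * (α*α') ∈ (1 : QFrac F)) ?_ ?_
        · intro β hβ β' hβ' y hy
          refine QF.mem_mul_elim hy (C := fun y =>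
            l * D * ((b^2 - l/4) * ((β*β')*y)) * (α*α') ∈ (1 : QFrac F)) ?_ ?_
          · intro β'' hβ'' β''' hβ'''
            refine QF.int_congr (QF.int_mul (QF.int_mul (hintl β hβ β'' hβ'')
              (hDaa α hα α' hα')) (QF.E_e hEb hβ' hβ''')) ?_
            ring
          · intro x y hx hy
            exact QF.int_congr (QF.int_add hx hy) (by ring)
        · intro x y hx hy
          intro z hz
          exact QF.int_congr (QF.int_add (hx z hz) (hy z hz)) (by ring)
      have T4 : ∀ x ∈ 𝔟 * 𝔟, ∀ y ∈ 𝔟 * 𝔟,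
          4 * (((b^2 - l/4) * (c^2 - l*D/4)) * (x*y)) * (α*α') ∈ (1 : QFrac F) := by
        intro x hx
        refine QF.mem_mul_elim hx (C := fun x => ∀ y ∈ 𝔟 * 𝔟,
          4 * (((b^2 - l/4) * (c^2 - l*D/4)) * (x*y)) * (α*α') ∈ (1 : QFrac F)) ?_ ?_
        · intro β hβ β' hβ' y hy
          refine QF.mem_mul_elim hy (C := fun y =>
            4 * (((b^2 - l/4) * (c^2 - l*D/4)) * ((β*β')*y)) * (α*α') ∈ (1 : QFrac F)) ?_ ?_
          · intro β'' hβ'' β''' hβ'''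
            refine QF.int_congr (QF.int_mul (QF.int_mul QF.int_four
              (QF.E_e hEb hβ hβ''))
              (QF.E_e hEc (FractionalIdeal.mul_mem_mul hα hβ')
                (FractionalIdeal.mul_mem_mul hα' hβ'''))) ?_
            ring
          · intro x y hx hy
            exact QF.int_congr (QF.int_add hx hy) (by ring)
        · intro x y hx hy
          intro z hz
          exact QF.int_congr (QF.int_add (hx z hz) (hy z hz)) (by ring)
      have hμ : (m^2 - m) * (D * (α*α')) ∈ (1 : QFrac F) := by
        refine QF.int_mul (QF.int_iff.mpr ⟨μ^2 - μ, ?_⟩) (hDaa α hα α' hα')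
        rw [map_sub, map_pow, hm]
      have hiden : ((2*b*c*t)^2 - D/4) * (α*α') =
          (m^2 - m) * (D * (α*α')) + l * ((c^2 - l*D/4) * (t*t)) * (α*α')
            + l * D * ((b^2 - l/4) * (t*t)) * (α*α')
            + 4 * (((b^2 - l/4) * (c^2 - l*D/4)) * (t*t)) * (α*α') := by
        linear_combination ((D/4) * (l*t + (1 - 2*m)) * (α*α')) * hlt
      rw [hiden]
      exact QF.madd (QF.madd (QF.madd hμ (T2 t ht t ht)) (T3 t ht t ht)) (T4 t ht t ht)
    · -- M
      intro u v hN
      have key : ∀ β ∈ 𝔟, (2*v) * β ∈ 𝔞 * 𝔟 := by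
        intro β hβ
        have hn : QNint F (l*D) ((2*u)*(b*β)) (v*β) := by
          constructor
          · exact QF.int_congr (QF.int_mul hN.1 (QF.E_F1 hEb hβ)) (by ring)
          · refine QF.int_congr (QF.int_add
              (QF.int_mul (QF.int_mul hN.1 hN.1) (QF.E_e hEb hβ hβ))
              (QF.int_mul (hintl β hβ β hβ) hN.2)) ?_
            ring
        exact QF.mem_congr (QF.E_M hEc hn) (by ring)
      have s : spanSingleton (nonZeroDivisors (𝓞 F)) (2*v) * 𝔟 ≤ 𝔞 * 𝔟 :=
        QF.span_mul_le key
      have : spanSingleton (nonZeroDivisors (𝓞 F)) (2*v) ≤ 𝔞 := by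
        calc spanSingleton (nonZeroDivisors (𝓞 F)) (2*v)
            = spanSingleton (nonZeroDivisors (𝓞 F)) (2*v) * 1 := (mul_one _).symm
          _ = spanSingleton (nonZeroDivisors (𝓞 F)) (2*v) * (𝔟 * 𝔟⁻¹) := by
              rw [mul_inv_cancel₀ h𝔟0]
          _ = (spanSingleton (nonZeroDivisors (𝓞 F)) (2*v) * 𝔟) * 𝔟⁻¹ := by ring
          _ ≤ (𝔞 * 𝔟) * 𝔟⁻¹ := QF.mul_le_mul' s le_rfl
          _ = 𝔞 * (𝔟 * 𝔟⁻¹) := by ring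
          _ = 𝔞 * 1 := by rw [mul_inv_cancel₀ h𝔟0]
          _ = 𝔞 := mul_one _
      exact this (FractionalIdeal.mem_spanSingleton_self _ _)

end QFMain

section QFRed

variable {F : Type*} [Field F] [NumberField F]
variable {K : Type*} [Field K] [Algebra F K] [Algebra (𝓞 F) K] [IsScalarTower (𝓞 F) F K]
  [FiniteDimensional F K]

namespace QF

lemma decomp (hK : Module.finrank F K = 2) {s : K} (hsF : ∀ t : F, algebraMap F K t ≠ s)
    (x : K) : ∃ u v : F, x = algebraMap F K u + algebraMap F K v * s := by
  have hli : LinearIndependent F ![(1 : K), s] := by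
    rw [LinearIndependent.pair_iff]
    intro c d hcd
    rcases eq_or_ne d 0 with hd | hd
    · subst hd
      rw [zero_smul, add_zero, smul_eq_zero] at hcd
      refine ⟨hcd.resolve_right one_ne_zero, rfl⟩
    · exfalso
      apply hsF (-c / d)
      have hd' : algebraMap F K d ≠ 0 := by
        simpa using hd
      have h2 : algebraMap F K c + algebraMap F K d * s = 0 := by
        simpa [Algebra.smul_def] using hcd
      rw [_root_.map_div₀, _root_.map_neg]
      field_simp
      linear_combination -h2
  let B := basisOfLinearIndependentOfCardEqFinrank hli (by simp [hK])
  have hB : ⇑B = ![(1 : K), s] := coe_basisOfLinearIndependentOfCardEqFinrank hli (by simp [hK])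
  have hx := B.sum_repr x
  rw [Fin.sum_univ_two] at hx
  refine ⟨B.repr x 0, B.repr x 1, ?_⟩
  have h0 : B 0 = 1 := by rw [hB]; rfl
  have h1 : B 1 = s := by rw [hB]; rfl
  conv_lhs => rw [← hx]
  rw [h0, h1, Algebra.smul_def, Algebra.smul_def, mul_one]

lemma coords {s : K} (hsF : ∀ t : F, algebraMap F K t ≠ s) {u v u' v' : F}
    (h : algebraMap F K u + algebraMap F K v * s
        = algebraMap F K u' + algebraMap F K v' * s) : u = u' ∧ v = v' := by
  rcases eq_or_ne v v' with hv | hv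
  · subst hv
    refine ⟨(algebraMap F K).injective ?_, rfl⟩
    have := add_right_cancel h
    exact this
  · exfalso
    apply hsF ((u - u') / (v' - v))
    have hd' : algebraMap F K (v' - v) ≠ 0 := by
      rw [_root_.map_sub]
      intro h0
      exact hv (((algebraMap F K).injective (by linear_combination h0)).symm)
    rw [_root_.map_div₀]
    rw [div_eq_iff hd']
    rw [_root_.map_sub, _root_.map_sub]
    linear_combination h

lemma sigma_fix (hK : Module.finrank F K = 2) {s : K}
    (hsF : ∀ t : F, algebraMap F K t ≠ s) {σ : K ≃ₐ[F] K} (hfix : σ s = s) :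
    σ = AlgEquiv.refl := by
  apply AlgEquiv.ext
  intro x
  obtain ⟨u, v, rfl⟩ := decomp hK hsF x
  rw [_root_.map_add, _root_.map_mul, AlgEquiv.commutes, AlgEquiv.commutes, hfix]
  rfl

lemma sigma_s (hK : Module.finrank F K = 2) {s : K} {ξ : F}
    (hsF : ∀ t : F, algebraMap F K t ≠ s) {σ : K ≃ₐ[F] K} (hσ : σ ≠ AlgEquiv.refl)
    (hs2 : s ^ 2 = algebraMap F K ξ) : σ s = -s := by
  have h : (σ s) ^ 2 = s ^ 2 := by rw [← _root_.map_pow, hs2, AlgEquiv.commutes]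
  have h0 : (σ s - s) * (σ s + s) = 0 := by linear_combination h
  rcases mul_eq_zero.mp h0 with h1 | h1
  · exact absurd (sigma_fix hK hsF (by linear_combination h1)) hσ
  · linear_combination h1

lemma mem_IC_iff {s : K} {ξ : F} (hs2 : s ^ 2 = algebraMap F K ξ)
    {σ : K ≃ₐ[F] K} (hσs : σ s = -s) (u v : F) :
    algebraMap F K u + algebraMap F K v * s ∈ integralClosure (𝓞 F) K ↔ QNint F ξ u v := by
  set x := algebraMap F K u + algebraMap F K v * s with hx
  have hσx : σ x = algebraMap F K u - algebraMap F K v * s := by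
    rw [hx, _root_.map_add, _root_.map_mul, AlgEquiv.commutes, AlgEquiv.commutes, hσs]
    ring
  have e1 : x + σ x = algebraMap F K (2 * u) := by
    rw [hσx, hx, _root_.map_mul, _root_.map_ofNat]
    ring
  have e2 : x * σ x = algebraMap F K (u ^ 2 - ξ * v ^ 2) := by
    rw [hσx, hx]
    simp only [_root_.map_sub, _root_.map_pow, _root_.map_mul]
    linear_combination (-(algebraMap F K v) ^ 2) * hs2
  constructor
  · intro h
    have hint : IsIntegral (𝓞 F) x := h
    have hσint : IsIntegral (𝓞 F) (σ x) := hint.map (AlgEquiv.restrictScalars (𝓞 F) σ)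
    constructor
    · have htr : IsIntegral (𝓞 F) (x + σ x) := hint.add hσint
      rw [e1] at htr
      rw [isIntegral_algebraMap_iff (algebraMap F K).injective] at htr
      exact QF.int_iff.mpr (IsIntegrallyClosed.isIntegral_iff.mp htr)
    · have hnm : IsIntegral (𝓞 F) (x * σ x) := hint.mul hσint
      rw [e2] at hnm
      rw [isIntegral_algebraMap_iff (algebraMap F K).injective] at hnm
      exact QF.int_iff.mpr (IsIntegrallyClosed.isIntegral_iff.mp hnm)
  · rintro ⟨h1, h2⟩
    obtain ⟨r1, hr1⟩ := QF.int_iff.mp h1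
    obtain ⟨r0, hr0⟩ := QF.int_iff.mp h2
    refine QF.isIntegral_of_quad x (-r1) r0 ?_
    have t1 : algebraMap (𝓞 F) K (-r1) = -(algebraMap F K (2 * u)) := by
      rw [IsScalarTower.algebraMap_apply (𝓞 F) F K, _root_.map_neg, _root_.map_neg, hr1]
    have t0 : algebraMap (𝓞 F) K r0 = algebraMap F K (u ^ 2 - ξ * v ^ 2) := by
      rw [IsScalarTower.algebraMap_apply (𝓞 F) F K, hr0]
    rw [t1, t0, hx]
    simp only [_root_.map_sub, _root_.map_pow, _root_.map_mul, _root_.map_ofNat]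
    linear_combination ((algebraMap F K v) ^ 2) * hs2

lemma mem_orderSet_iff {s : K} (hsF : ∀ t : F, algebraMap F K t ≠ s)
    (𝔠 : QFrac F) (a v₀ : F) (hv₀ : 2 * v₀ = (1 : F)) (u v : F) :
    algebraMap F K u + algebraMap F K v * s ∈
        orderSet F 𝔠 (algebraMap F K a + algebraMap F K v₀ * s) ↔
      (2 * v ∈ 𝔠 ∧ u - 2 * v * a ∈ (1 : QFrac F)) := by
  constructor
  · rintro ⟨c, α, hα, heq⟩
    have heq' : algebraMap F K u + algebraMap F K v * s
        = algebraMap F K (algebraMap (𝓞 F) F c + α * a) + algebraMap F K (α * v₀) * s := by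
      rw [heq, _root_.map_add, _root_.map_mul, _root_.map_mul]
      ring
    obtain ⟨e1, e2⟩ := coords hsF heq'
    constructor
    · refine QF.mem_congr hα ?_
      rw [e2]
      linear_combination -α * hv₀
    · refine QF.int_congr (QF.int_algebraMap c) ?_
      rw [e1, e2]
      linear_combination (α * a) * hv₀
  · rintro ⟨h2v, hw⟩
    obtain ⟨c, hc⟩ := QF.int_iff.mp hw
    refine ⟨c, 2 * v, h2v, ?_⟩
    rw [hc]
    have hv' : (2 : K) * algebraMap F K v₀ = 1 := by
      rw [← _root_.map_ofNat (algebraMap F K) 2, ← _root_.map_mul, hv₀, _root_.map_one]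
    simp only [_root_.map_sub, _root_.map_mul, _root_.map_ofNat]
    linear_combination (-(algebraMap F K v) * s) * hv'

lemma ordereq_iff (hK : Module.finrank F K = 2) {s : K} {ξ : F}
    (hsF : ∀ t : F, algebraMap F K t ≠ s) (hs2 : s ^ 2 = algebraMap F K ξ)
    {σ : K ≃ₐ[F] K} (hσs : σ s = -s) (𝔠 : QFrac F) (a v₀ : F) (hv₀ : 2 * v₀ = (1 : F)) :
    orderSet F 𝔠 (algebraMap F K a + algebraMap F K v₀ * s)
        = (integralClosure (𝓞 F) K : Set K) ↔ QECond F ξ 𝔠 a := by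
  constructor
  · intro h u v
    have hx := Set.ext_iff.mp h (algebraMap F K u + algebraMap F K v * s)
    rw [SetLike.mem_coe] at hx
    exact ((mem_orderSet_iff hsF 𝔠 a v₀ hv₀ u v).symm.trans hx).trans (mem_IC_iff hs2 hσs u v)
  · intro hE
    ext x
    obtain ⟨u, v, rfl⟩ := decomp hK hsF x
    rw [SetLike.mem_coe, mem_orderSet_iff hsF 𝔠 a v₀ hv₀ u v, mem_IC_iff hs2 hσs u v]
    exact hE u v

end QF
end QFRed

section QFTop

variable {F : Type*} [Field F] [NumberField F]
variable {K : Type*} [Field K] [Algebra F K] [Algebra (𝓞 F) K] [IsScalarTower (𝓞 F) F K]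
  [FiniteDimensional F K]

namespace QF

lemma E_of_fund (hK : Module.finrank F K = 2) {σ : K ≃ₐ[F] K} (hσ : σ ≠ AlgEquiv.refl)
    {ξ : F} (hξ0 : ξ ≠ 0) (hns : ∀ m : F, ξ ≠ m ^ 2) {𝔠 : QFrac F}
    (hfd : IsFundDisc F σ ξ 𝔠) : ∃ a, QECond F ξ 𝔠 a := by
  obtain ⟨ω, hω2, S, hS1, hS2⟩ := hfd
  have hset : orderSet F 𝔠 ω = (integralClosure (𝓞 F) K : Set K) := hS1.symm.trans hS2
  set s : K := ω - σ ω with hs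
  have hs2 : s ^ 2 = algebraMap F K ξ := hω2
  have hsF : ∀ t : F, algebraMap F K t ≠ s := by
    intro t ht
    apply hns t
    apply (algebraMap F K).injective
    rw [_root_.map_pow, ht, hs2]
  have hσs : σ s = -s := sigma_s hK hsF hσ hs2
  obtain ⟨u₀, v₀, hω⟩ := decomp hK hsF ω
  have hσω : σ ω = algebraMap F K u₀ - algebraMap F K v₀ * s := by
    conv_lhs => rw [hω]
    rw [_root_.map_add, _root_.map_mul, AlgEquiv.commutes, AlgEquiv.commutes, hσs]
    ring
  have hs0 : s ≠ 0 := by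
    intro h0
    apply hξ0
    apply (algebraMap F K).injective
    rw [_root_.map_zero, ← hs2, h0]
    ring
  have hv : 2 * v₀ = 1 := by
    have h2 : s = algebraMap F K (2 * v₀) * s := by
      conv_lhs => rw [hs, hσω, hω]
      simp only [_root_.map_mul, _root_.map_ofNat]
      ring
    have h4 : (algebraMap F K (2 * v₀) - 1) * s = 0 := by linear_combination -h2
    rcases mul_eq_zero.mp h4 with h5 | h5
    · apply (algebraMap F K).injective
      rw [_root_.map_one]
      linear_combination h5
    · exact absurd h5 hs0
  refine ⟨u₀, (ordereq_iff hK hsF hs2 hσs 𝔠 u₀ v₀ hv).mp ?_⟩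
  rw [← hω]
  exact hset

lemma fund_of_E (hK : Module.finrank F K = 2) {σ : K ≃ₐ[F] K} (hσ : σ ≠ AlgEquiv.refl)
    {ξ : F} (hns : ∀ m : F, ξ ≠ m ^ 2) (hsq : ∃ s : K, s ^ 2 = algebraMap F K ξ)
    {𝔠 : QFrac F} {a : F} (hE : QECond F ξ 𝔠 a) : IsFundDisc F σ ξ 𝔠 := by
  obtain ⟨s, hs2⟩ := hsq
  have hsF : ∀ t : F, algebraMap F K t ≠ s := by
    intro t ht
    apply hns t
    apply (algebraMap F K).injective
    rw [_root_.map_pow, ht, hs2]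
  have hσs : σ s = -s := sigma_s hK hsF hσ hs2
  have hv : 2 * (1/2 : F) = 1 := by norm_num
  set ω : K := algebraMap F K a + algebraMap F K (1/2 : F) * s with hωdef
  have hσω : σ ω = algebraMap F K a - algebraMap F K (1/2 : F) * s := by
    rw [hωdef, _root_.map_add, _root_.map_mul, AlgEquiv.commutes, AlgEquiv.commutes, hσs]
    ring
  have hωs : ω - σ ω = s := by
    rw [hσω, hωdef]
    have h1 : algebraMap F K (2 * (1/2 : F)) = 1 := by rw [hv, _root_.map_one]
    simp only [_root_.map_mul, _root_.map_ofNat] at h1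
    linear_combination s * h1
  refine ⟨ω, by rw [hωs, hs2], (integralClosure (𝓞 F) K).toSubring, ?_, rfl⟩
  have h2 := (ordereq_iff hK hsF hs2 hσs 𝔠 a (1/2) hv).mpr hE
  rw [hωdef]
  exact h2.symm

lemma nonsquare_of_neg (htr : ∀ φ : F →+* ℂ, ∀ x : F, (φ x).im = 0)
    {y : F} (hneg : ∀ τ : F →+* ℝ, τ y < 0) : ∀ m : F, y ≠ m ^ 2 := by
  intro m hy
  let φ' : F →ₐ[ℚ] ℂ := IsAlgClosed.lift
  let φ : F →+* ℂ := φ'.toRingHom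
  let τ : F →+* ℝ :=
    { toFun := fun x => (φ x).re
      map_one' := by simp
      map_mul' := fun x y => by
        simp [Complex.mul_re, htr φ x, htr φ y]
      map_zero' := by simp
      map_add' := fun x y => by simp [Complex.add_re] }
  have h := hneg τ
  rw [hy, _root_.map_pow] at h
  exact absurd h (sq_nonneg (τ m)).not_gt

end QF
end QFTop

end QFAEverything

/-- assuming moreover that `D𝔞²` and `l𝔟²` are coprime,
`(D,𝔞)` is fundamental iff `(Δ,𝔠) = (lD, 𝔞𝔟)` is fundamental. -/
theorem statement_1
    (F : Type*) [Field F] [NumberField F]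
    (htr : ∀ φ : F →+* ℂ, ∀ x : F, (φ x).im = 0)
    (Kl : Type*) [Field Kl] [Algebra F Kl] [Algebra (𝓞 F) Kl] [IsScalarTower (𝓞 F) F Kl]
    [FiniteDimensional F Kl] (hKl : Module.finrank F Kl = 2)
    (σl : Kl ≃ₐ[F] Kl) (hσl : σl ≠ AlgEquiv.refl)
    (KD : Type*) [Field KD] [Algebra F KD] [Algebra (𝓞 F) KD] [IsScalarTower (𝓞 F) F KD]
    [FiniteDimensional F KD] (hKD : Module.finrank F KD = 2)
    (σD : KD ≃ₐ[F] KD) (hσD : σD ≠ AlgEquiv.refl)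
    (KΔ : Type*) [Field KΔ] [Algebra F KΔ] [Algebra (𝓞 F) KΔ] [IsScalarTower (𝓞 F) F KΔ]
    [FiniteDimensional F KΔ] (hKΔ : Module.finrank F KΔ = 2)
    (σΔ : KΔ ≃ₐ[F] KΔ) (hσΔ : σΔ ≠ AlgEquiv.refl)
    (l D : F) (hl0 : l ≠ 0) (hlns : ∀ m : F, l ≠ m ^ 2)
    (hD0 : D ≠ 0) (hDns : ∀ m : F, D ≠ m ^ 2)
    (hsqrtl : ∃ s : Kl, s ^ 2 = algebraMap F Kl l)
    (hsqrtD : ∃ s : KD, s ^ 2 = algebraMap F KD D)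
    (hsqrtΔ : ∃ s : KΔ, s ^ 2 = algebraMap F KΔ (l * D))
    (𝔞 𝔟 : FractionalIdeal (nonZeroDivisors (𝓞 F)) F) (h𝔞0 : 𝔞 ≠ 0) (h𝔟0 : 𝔟 ≠ 0)
    (hfund : IsFundDisc F σl l 𝔟)
    (hint : ∃ I : Ideal (𝓞 F),
      (I : FractionalIdeal (nonZeroDivisors (𝓞 F)) F)
          = FractionalIdeal.spanSingleton (nonZeroDivisors (𝓞 F)) l * 𝔟 ^ 2 ∧
        IsCoprime I (Ideal.span {(2 : 𝓞 F)}))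
    (hneg : ∀ τ : F →+* ℝ, τ (l * D) < 0)
    (hmem : D ∈ 𝔞⁻¹ * 𝔞⁻¹)
    (hcop : ∃ ID Il : Ideal (𝓞 F),
      (ID : FractionalIdeal (nonZeroDivisors (𝓞 F)) F)
          = FractionalIdeal.spanSingleton (nonZeroDivisors (𝓞 F)) D * 𝔞 ^ 2 ∧
      (Il : FractionalIdeal (nonZeroDivisors (𝓞 F)) F)
          = FractionalIdeal.spanSingleton (nonZeroDivisors (𝓞 F)) l * 𝔟 ^ 2 ∧
      IsCoprime ID Il) :
    IsFundDisc F σD D 𝔞 ↔ IsFundDisc F σΔ (l * D) (𝔞 * 𝔟) := by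

  obtain ⟨Ii, hIi, hcop2⟩ := hint
  obtain ⟨ID, Il, hID, hIl, hcopDl⟩ := hcop
  obtain ⟨b, hEb⟩ := QF.E_of_fund hKl hσl hl0 hlns hfund
  have hintl : ∀ β ∈ 𝔟, ∀ β' ∈ 𝔟, l * (β * β') ∈ (1 : QFrac F) := by
    intro β hβ β' hβ'
    have h1 : l * (β * β') ∈ (Ii : QFrac F) := by
      rw [hIi, sq]
      exact FractionalIdeal.mul_mem_mul (FractionalIdeal.mem_spanSingleton_self _ _)
        (FractionalIdeal.mul_mem_mul hβ hβ')
    exact FractionalIdeal.coeIdeal_le_one h1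
  have hDaa : ∀ α ∈ 𝔞, ∀ α' ∈ 𝔞, D * (α * α') ∈ (1 : QFrac F) := by
    intro α hα α' hα'
    have h1 : D * (α * α') ∈ (𝔞⁻¹ * 𝔞⁻¹) * (𝔞 * 𝔞) :=
      FractionalIdeal.mul_mem_mul hmem (FractionalIdeal.mul_mem_mul hα hα')
    have h2 : (𝔞⁻¹ * 𝔞⁻¹) * (𝔞 * 𝔞) = 1 := by
      rw [show (𝔞⁻¹ * 𝔞⁻¹) * (𝔞 * 𝔞) = (𝔞 * 𝔞⁻¹) * (𝔞 * 𝔞⁻¹) by ring,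
        mul_inv_cancel₀ h𝔞0, one_mul]
    rwa [h2] at h1
  have hodd : ∃ t : F, ∃ μ : 𝓞 F, t ∈ 𝔟 * 𝔟 ∧ l * t = 1 - 2 * algebraMap (𝓞 F) F μ := by
    rw [Ideal.isCoprime_iff_sup_eq] at hcop2
    have h1 : (1 : 𝓞 F) ∈ Ii ⊔ Ideal.span {(2 : 𝓞 F)} := by rw [hcop2]; trivial
    obtain ⟨i, hi, j, hj, hij⟩ := Submodule.mem_sup.mp h1
    obtain ⟨μ, hμ⟩ := Ideal.mem_span_singleton'.mp hj
    have hiF : algebraMap (𝓞 F) F i ∈ (Ii : QFrac F) :=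
      (FractionalIdeal.mem_coeIdeal _).mpr ⟨i, hi, rfl⟩
    rw [hIi, sq] at hiF
    obtain ⟨t, ht, hit⟩ := FractionalIdeal.mem_singleton_mul.mp hiF
    refine ⟨t, μ, ht, ?_⟩
    rw [← hit]
    have h2 := congrArg (algebraMap (𝓞 F) F) hij
    rw [← hμ, _root_.map_add, _root_.map_one, _root_.map_mul, _root_.map_ofNat] at h2
    linear_combination h2
  have hbez : ∃ p q : F,
      p ∈ FractionalIdeal.spanSingleton (nonZeroDivisors (𝓞 F)) D * (𝔞 * 𝔞) ∧
      q ∈ FractionalIdeal.spanSingleton (nonZeroDivisors (𝓞 F)) l * (𝔟 * 𝔟) ∧ p + q = 1 := by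
    rw [Ideal.isCoprime_iff_sup_eq] at hcopDl
    have h1 : (1 : 𝓞 F) ∈ ID ⊔ Il := by rw [hcopDl]; trivial
    obtain ⟨i, hi, j, hj, hij⟩ := Submodule.mem_sup.mp h1
    refine ⟨algebraMap (𝓞 F) F i, algebraMap (𝓞 F) F j, ?_, ?_, ?_⟩
    · have h2 : algebraMap (𝓞 F) F i ∈ (ID : QFrac F) :=
        (FractionalIdeal.mem_coeIdeal _).mpr ⟨i, hi, rfl⟩
      rwa [hID, sq] at h2
    · have h2 : algebraMap (𝓞 F) F j ∈ (Il : QFrac F) :=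
        (FractionalIdeal.mem_coeIdeal _).mpr ⟨j, hj, rfl⟩
      rwa [hIl, sq] at h2
    · rw [← _root_.map_add, hij, _root_.map_one]
  have hmain := QF.main l D b 𝔞 𝔟 h𝔟0 hEb hintl hDaa hodd hbez
  have hΔns : ∀ m : F, l * D ≠ m ^ 2 := QF.nonsquare_of_neg htr hneg
  constructor
  · intro h
    obtain ⟨a, hEa⟩ := QF.E_of_fund hKD hσD hD0 hDns h
    obtain ⟨c, hEc⟩ := hmain.mp ⟨a, hEa⟩
    exact QF.fund_of_E hKΔ hσΔ hΔns hsqrtΔ hEc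
  · intro h
    obtain ⟨c, hEc⟩ := QF.E_of_fund hKΔ hσΔ (mul_ne_zero hl0 hD0) hΔns h
    obtain ⟨a, hEa⟩ := hmain.mpr ⟨c, hEc⟩
    exact QF.fund_of_E hKD hσD hDns hsqrtD hEa
end

section
/- Let F be a number field with ring of integers 𝒪, let K be a field extension of F of degree 2, let ω ∈ K \ F, and let 𝔞 be a fractional ideal of F. Then the 𝒪-submodule 𝒪 + 𝔞·ω of K (where 𝔞·ω = {αω : α ∈ 𝔞}) is a subring of K if and only if Tr_{K/F}(ω) ∈ 𝔞⁻¹ and N_{K/F}(ω) ∈ 𝔞⁻². -/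
open NumberField

/-- `𝒪 + 𝔞·ω` is a subring of `K` iff `Tr_{K/F}(ω) ∈ 𝔞⁻¹` and
`N_{K/F}(ω) ∈ 𝔞⁻²`. -/
theorem statement_3
    (F : Type*) [Field F] [NumberField F]
    (K : Type*) [Field K] [Algebra F K]
    [FiniteDimensional F K] (hK : Module.finrank F K = 2)
    (ω : K) (hω : ω ∉ Set.range (algebraMap F K))
    (𝔞 : FractionalIdeal (nonZeroDivisors (𝓞 F)) F) (h𝔞0 : 𝔞 ≠ 0) :
    (∃ S : Subring K, (S : Set K) = orderSet F 𝔞 ω) ↔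
      (Algebra.trace F K ω ∈ 𝔞⁻¹ ∧ Algebra.norm F ω ∈ 𝔞⁻¹ * 𝔞⁻¹) := by
  classical
  have hli : LinearIndependent F ![(1:K), ω] :=
    (LinearIndependent.pair_iff' one_ne_zero).2 (fun a ha => hω ⟨a, by simpa [Algebra.smul_def] using ha⟩)
  have hcard : Fintype.card (Fin 2) = Module.finrank F K := by simp [hK]
  set b : Module.Basis (Fin 2) F K := basisOfLinearIndependentOfCardEqFinrank hli hcard with hbdef
  have hb0 : b 0 = 1 := by rw [hbdef, coe_basisOfLinearIndependentOfCardEqFinrank]; rfl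
  have hb1 : b 1 = ω := by rw [hbdef, coe_basisOfLinearIndependentOfCardEqFinrank]; rfl
  set a0 : F := b.repr (ω * ω) 0 with ha0
  set a1 : F := b.repr (ω * ω) 1 with ha1
  have hsq : ω * ω = algebraMap F K a0 + algebraMap F K a1 * ω := by
    conv_lhs => rw [← b.sum_repr (ω * ω)]
    rw [Fin.sum_univ_two, hb0, hb1, ha0, ha1, Algebra.smul_def, Algebra.smul_def, mul_one]
  have hreprω : ∀ i, b.repr ω i = if i = 1 then 1 else 0 := by
    intro i
    rw [← hb1, b.repr_self]
    simp [Finsupp.single_apply, eq_comm]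
  have htr : Algebra.trace F K ω = a1 := by
    rw [Algebra.trace_eq_matrix_trace b ω, Matrix.trace_fin_two]
    simp [Algebra.leftMulMatrix_eq_repr_mul, hb0, hb1, mul_one, hreprω]; rfl
  have hnm : Algebra.norm F ω = -a0 := by
    rw [Algebra.norm_eq_matrix_det b ω, Matrix.det_fin_two]
    simp [Algebra.leftMulMatrix_eq_repr_mul, hb0, hb1, mul_one, hreprω]; rfl
  have huniq : ∀ x y x' y' : F,
      algebraMap F K x + algebraMap F K y * ω = algebraMap F K x' + algebraMap F K y' * ω →
      x = x' ∧ y = y' := by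
    intro x y x' y' h
    have h' : (x - x') • (1:K) + (y - y') • ω = 0 := by
      rw [Algebra.smul_def, Algebra.smul_def, map_sub, map_sub, mul_one]
      linear_combination h
    obtain ⟨h1, h2⟩ := LinearIndependent.pair_iff.1 hli _ _ h'
    exact ⟨sub_eq_zero.1 h1, sub_eq_zero.1 h2⟩
  have hainv : 𝔞 * 𝔞⁻¹ = 1 := mul_inv_cancel₀ h𝔞0
  have hnegmem : ∀ (I : FractionalIdeal (nonZeroDivisors (𝓞 F)) F) (x : F), -x ∈ I ↔ x ∈ I :=
    fun I x => ⟨fun h => by simpa using (I : Submodule (𝓞 F) F).neg_mem h,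
      fun h => (I : Submodule (𝓞 F) F).neg_mem h⟩
  rw [htr, hnm, hnegmem]
  constructor
  · rintro ⟨S, hS⟩
    have key : ∀ α ∈ 𝔞, ∀ β ∈ 𝔞,
        (α * β * a0 ∈ (1 : FractionalIdeal (nonZeroDivisors (𝓞 F)) F)) ∧ α * β * a1 ∈ 𝔞 := by
      intro α hα β hβ
      have hmem : ∀ γ ∈ 𝔞, algebraMap F K γ * ω ∈ S := by
        intro γ hγ
        have : algebraMap F K γ * ω ∈ orderSet F 𝔞 ω := ⟨0, γ, hγ, by simp⟩
        rw [← hS] at this; exact this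
      have hprod : (algebraMap F K α * ω) * (algebraMap F K β * ω) ∈ orderSet F 𝔞 ω := by
        rw [← hS]; exact mul_mem (hmem α hα) (hmem β hβ)
      obtain ⟨c, γ, hγ, hc⟩ := hprod
      have heq : algebraMap F K (α * β * a0) + algebraMap F K (α * β * a1) * ω =
          algebraMap F K (algebraMap (𝓞 F) F c) + algebraMap F K γ * ω := by
        rw [← hc, map_mul, map_mul, map_mul, map_mul]
        linear_combination (-(algebraMap F K α * algebraMap F K β)) * hsq
      obtain ⟨h1, h2⟩ := huniq _ _ _ _ heq
      exact ⟨(FractionalIdeal.mem_one_iff _).2 ⟨c, h1.symm⟩, h2 ▸ hγ⟩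
    have main : ∀ (x : F) (J : FractionalIdeal (nonZeroDivisors (𝓞 F)) F),
        (∀ α ∈ 𝔞, ∀ β ∈ 𝔞, α * β * x ∈ J) →
        x ∈ J * 𝔞⁻¹ * 𝔞⁻¹ := by
      intro x J hx
      have hle : FractionalIdeal.spanSingleton (nonZeroDivisors (𝓞 F)) x * (𝔞 * 𝔞) ≤ J := by
        rw [FractionalIdeal.mul_le]
        intro i hi j hj
        obtain ⟨z, hz⟩ := (FractionalIdeal.mem_spanSingleton _).1 hi
        have hj' : x * j ∈ J := by
          refine FractionalIdeal.mul_induction_on hj (fun α hα β hβ => ?_)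
            (fun u v hu hv => ?_)
          · have := hx α hα β hβ
            rwa [show x * (α * β) = α * β * x by ring]
          · rw [mul_add]; exact (J : Submodule (𝓞 F) F).add_mem hu hv
        rw [← hz, smul_mul_assoc]
        exact (J : Submodule (𝓞 F) F).smul_mem z hj'
      have hle2 : FractionalIdeal.spanSingleton (nonZeroDivisors (𝓞 F)) x *
          (𝔞 * 𝔞) * (𝔞⁻¹ * 𝔞⁻¹) ≤ J * (𝔞⁻¹ * 𝔞⁻¹) := mul_left_mono (a := 𝔞⁻¹ * 𝔞⁻¹) hle
      have heq1 : FractionalIdeal.spanSingleton (nonZeroDivisors (𝓞 F)) x *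
          (𝔞 * 𝔞) * (𝔞⁻¹ * 𝔞⁻¹) = FractionalIdeal.spanSingleton (nonZeroDivisors (𝓞 F)) x := by
        rw [show FractionalIdeal.spanSingleton (nonZeroDivisors (𝓞 F)) x * (𝔞 * 𝔞) * (𝔞⁻¹ * 𝔞⁻¹)
          = FractionalIdeal.spanSingleton (nonZeroDivisors (𝓞 F)) x * ((𝔞 * 𝔞⁻¹) * (𝔞 * 𝔞⁻¹)) by ring,
          hainv, mul_one, mul_one]
      rw [heq1] at hle2
      rw [mul_assoc]
      exact FractionalIdeal.spanSingleton_le_iff_mem.1 hle2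
    constructor
    · have := main a1 𝔞 (fun α hα β hβ => (key α hα β hβ).2)
      rwa [show 𝔞 * 𝔞⁻¹ * 𝔞⁻¹ = (𝔞 * 𝔞⁻¹) * 𝔞⁻¹ by ring, hainv, one_mul] at this
    · have := main a0 1 (fun α hα β hβ => (key α hα β hβ).1)
      rwa [one_mul] at this
  · rintro ⟨ht, hn⟩
    have hkey1 : ∀ α ∈ 𝔞, ∀ β ∈ 𝔞, α * β * a1 ∈ 𝔞 := by
      intro α hα β hβ
      have : α * β * a1 ∈ 𝔞 * 𝔞 * 𝔞⁻¹ :=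
        FractionalIdeal.mul_mem_mul (FractionalIdeal.mul_mem_mul hα hβ) ht
      rwa [mul_assoc, hainv, mul_one] at this
    have hkey0 : ∀ α ∈ 𝔞, ∀ β ∈ 𝔞, ∃ c : 𝓞 F, algebraMap (𝓞 F) F c = α * β * a0 := by
      intro α hα β hβ
      have : α * β * a0 ∈ 𝔞 * 𝔞 * (𝔞⁻¹ * 𝔞⁻¹) :=
        FractionalIdeal.mul_mem_mul (FractionalIdeal.mul_mem_mul hα hβ) hn
      rw [show 𝔞 * 𝔞 * (𝔞⁻¹ * 𝔞⁻¹) = (𝔞 * 𝔞⁻¹) * (𝔞 * 𝔞⁻¹) by ring, hainv, mul_one] at this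
      exact (FractionalIdeal.mem_one_iff _).1 this
    refine ⟨{ carrier := orderSet F 𝔞 ω
              zero_mem' := ⟨0, 0, 𝔞.zero_mem, by simp⟩
              one_mem' := ⟨1, 0, 𝔞.zero_mem, by simp⟩
              add_mem' := ?_
              neg_mem' := ?_
              mul_mem' := ?_ }, rfl⟩
    · -- mul
      rintro x y ⟨c, α, hα, rfl⟩ ⟨c', α', hα', rfl⟩
      obtain ⟨e, he⟩ := hkey0 α hα α' hα'
      have hm1 : algebraMap (𝓞 F) F c * α' ∈ 𝔞 := by
        have := (𝔞 : Submodule (𝓞 F) F).smul_mem c hα'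
        rwa [Algebra.smul_def] at this
      have hm2 : algebraMap (𝓞 F) F c' * α ∈ 𝔞 := by
        have := (𝔞 : Submodule (𝓞 F) F).smul_mem c' hα
        rwa [Algebra.smul_def] at this
      refine ⟨c * c' + e, algebraMap (𝓞 F) F c * α' + algebraMap (𝓞 F) F c' * α + α * α' * a1,
        (𝔞 : Submodule (𝓞 F) F).add_mem ((𝔞 : Submodule (𝓞 F) F).add_mem hm1 hm2)
          (hkey1 α hα α' hα'), ?_⟩
      have heK := congrArg (algebraMap F K) he
      rw [map_mul, map_mul] at heK
      simp only [map_add, map_mul]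
      linear_combination (algebraMap F K α * algebraMap F K α') * hsq - heK
    · -- add
      rintro x y ⟨c, α, hα, rfl⟩ ⟨c', α', hα', rfl⟩
      exact ⟨c + c', α + α', (𝔞 : Submodule (𝓞 F) F).add_mem hα hα',
        by simp only [map_add]; ring⟩
    · -- neg
      rintro x ⟨c, α, hα, rfl⟩
      exact ⟨-c, -α, (𝔞 : Submodule (𝓞 F) F).neg_mem hα,
        by simp only [map_neg]; ring⟩
end

section
/- Let F be a totally real number field with ring of integers 𝒪, let B = QuaternionAlgebra F a b with a, b ∈ F^× satisfying τ(a) < 0 and τ(b) < 0 for every real embedding τ of F, and let R ⊆ B be an 𝒪-order, i.e. a subring of B containing 𝒪, finitely generated as an 𝒪-module, and spanning B over F. Then the quotient group R^×/𝒪^× of the unit group of R by the (central) unit group of 𝒪 is finite. -/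
open Quaternion NumberField

section Aux

variable {F : Type*} [Field F] {a b : F}

/-- The reduced norm on a quaternion algebra. -/
def qn (x : ℍ[F,a,b]) : F := x.re^2 - a*x.imI^2 - b*x.imJ^2 + a*b*x.imK^2

lemma mul_star_eq (x : ℍ[F,a,b]) : x * star x = algebraMap F ℍ[F,a,b] (qn x) := by
  rw [QuaternionAlgebra.coe_algebraMap]
  ext <;>
    simp only [QuaternionAlgebra.re_mul, QuaternionAlgebra.imI_mul, QuaternionAlgebra.imJ_mul,
      QuaternionAlgebra.imK_mul, qn, QuaternionAlgebra.re_star, QuaternionAlgebra.imI_star,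
      QuaternionAlgebra.imJ_star, QuaternionAlgebra.imK_star, QuaternionAlgebra.re_coe,
      QuaternionAlgebra.imI_coe, QuaternionAlgebra.imJ_coe, QuaternionAlgebra.imK_coe] <;> ring

lemma star_mul_eq (x : ℍ[F,a,b]) : star x * x = algebraMap F ℍ[F,a,b] (qn x) := by
  rw [QuaternionAlgebra.coe_algebraMap]
  ext <;>
    simp only [QuaternionAlgebra.re_mul, QuaternionAlgebra.imI_mul, QuaternionAlgebra.imJ_mul,
      QuaternionAlgebra.imK_mul, qn, QuaternionAlgebra.re_star, QuaternionAlgebra.imI_star,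
      QuaternionAlgebra.imJ_star, QuaternionAlgebra.imK_star, QuaternionAlgebra.re_coe,
      QuaternionAlgebra.imI_coe, QuaternionAlgebra.imJ_coe, QuaternionAlgebra.imK_coe] <;> ring

lemma qn_mul (x y : ℍ[F,a,b]) : qn (x*y) = qn x * qn y := by
  simp only [qn, QuaternionAlgebra.re_mul, QuaternionAlgebra.imI_mul, QuaternionAlgebra.imJ_mul,
    QuaternionAlgebra.imK_mul]
  ring

lemma qn_one : qn (1 : ℍ[F,a,b]) = 1 := by simp [qn]

lemma qn_algebraMap (c : F) : qn (algebraMap F ℍ[F,a,b] c) = c^2 := by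
  rw [QuaternionAlgebra.coe_algebraMap]
  simp [qn, QuaternionAlgebra.re_coe, QuaternionAlgebra.imI_coe, QuaternionAlgebra.imJ_coe,
    QuaternionAlgebra.imK_coe]

lemma qn_apply (τ : F →+* ℝ) (x : ℍ[F,a,b]) :
    τ (qn x) = (τ x.re)^2 + (-(τ a)) * (τ x.imI)^2 + (-(τ b)) * (τ x.imJ)^2
      + ((τ a) * (τ b)) * (τ x.imK)^2 := by
  simp only [qn, map_add, map_sub, map_mul, map_pow]
  ring

lemma mul_int_of_comm {R A : Type*} [CommRing R] [Ring A] [Algebra R A] {x y : A}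
    (h : Commute x y) (hx : IsIntegral R x) (hy : IsIntegral R y) : IsIntegral R (x * y) := by
  let S := Algebra.adjoin R ({x, y} : Set A)
  letI : CommRing S := Algebra.adjoinCommRingOfComm R (by
    rintro a ha c hc
    rcases ha with rfl | ha <;> rcases hc with rfl | hc
    · rfl
    · rw [Set.mem_singleton_iff] at hc; subst hc; exact h
    · rw [Set.mem_singleton_iff] at ha; subst ha; exact h.symm
    · rw [Set.mem_singleton_iff] at ha hc; subst ha; subst hc; rfl)
  have hxS : x ∈ S := Algebra.subset_adjoin (by simp)
  have hyS : y ∈ S := Algebra.subset_adjoin (by simp)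
  have hx' : IsIntegral R (⟨x, hxS⟩ : S) :=
    (isIntegral_algHom_iff S.val Subtype.val_injective).mp hx
  have hy' : IsIntegral R (⟨y, hyS⟩ : S) :=
    (isIntegral_algHom_iff S.val Subtype.val_injective).mp hy
  exact (isIntegral_algHom_iff S.val Subtype.val_injective).mpr (hx'.mul hy')

lemma aeval_star_comm {R A : Type*} [CommRing R] [Ring A] [StarRing A] [Algebra R A]
    (hst : ∀ r : R, star (algebraMap R A r) = algebraMap R A r) (x : A) (p : Polynomial R) :
    Polynomial.aeval (star x) p = star (Polynomial.aeval x p) := by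
  induction p using Polynomial.induction_on' with
  | add p q hp hq => simp [hp, hq]
  | monomial n c =>
    rw [Polynomial.aeval_monomial, Polynomial.aeval_monomial, star_mul, star_pow, hst,
      ← Algebra.commutes]

lemma isIntegral_star_of {R A : Type*} [CommRing R] [Ring A] [StarRing A] [Algebra R A]
    (hst : ∀ r : R, star (algebraMap R A r) = algebraMap R A r) {x : A}
    (hx : IsIntegral R x) : IsIntegral R (star x) := by
  obtain ⟨p, hm, hp⟩ := hx
  exact ⟨p, hm, by rw [show Polynomial.eval₂ (algebraMap R A) (star x) p =
    Polynomial.aeval (star x) p from rfl, aeval_star_comm hst, show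
    Polynomial.aeval x p = Polynomial.eval₂ (algebraMap R A) x p from rfl, hp, star_zero]⟩

lemma exists_sqcl (G : Type*) [CommGroup G] [Group.FG G] :
    ∃ T : Finset G, ∀ ε : G, ∃ ν ∈ T, ∃ η, ε = ν * η ^ 2 := by
  set sq := (powMonoidHom 2 : G →* G).range with hsq
  have : Finite (G ⧸ sq) := by
    have hfg : Group.FG (G ⧸ sq) := Group.fg_of_surjective (QuotientGroup.mk'_surjective sq)
    refine CommGroup.finite_of_fg_torsion _ ?_
    intro g
    refine isOfFinOrder_iff_pow_eq_one.mpr ⟨2, two_pos, ?_⟩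
    obtain ⟨x, rfl⟩ := QuotientGroup.mk'_surjective sq g
    rw [← map_pow]
    exact (QuotientGroup.eq_one_iff _).mpr ⟨x, rfl⟩
  refine ⟨(Set.finite_range (Quotient.out : G ⧸ sq → G)).toFinset, fun ε => ?_⟩
  refine ⟨(QuotientGroup.mk ε : G ⧸ sq).out, by simp, ?_⟩
  have h : (QuotientGroup.mk ((QuotientGroup.mk ε : G ⧸ sq).out) : G ⧸ sq) = QuotientGroup.mk ε :=
    QuotientGroup.out_eq' _
  obtain ⟨η, hη⟩ := QuotientGroup.eq.mp h
  refine ⟨η, ?_⟩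
  have : η ^ 2 = (QuotientGroup.mk ε : G ⧸ sq).out⁻¹ * ε := hη
  rw [this, ← mul_assoc, mul_inv_cancel, one_mul]

end Aux

section AuxNF

variable {F : Type*} [Field F] [NumberField F]

noncomputable def realEmb (htr : ∀ φ : F →+* ℂ, ∀ x : F, (φ x).im = 0) (φ : F →+* ℂ) :
    F →+* ℝ where
  toFun x := (φ x).re
  map_one' := by simp
  map_zero' := by simp
  map_add' x y := by simp
  map_mul' x y := by simp [Complex.mul_re, htr]

lemma realEmb_norm (htr : ∀ φ : F →+* ℂ, ∀ x : F, (φ x).im = 0) (φ : F →+* ℂ) (x : F) :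
    ‖φ x‖ = |realEmb htr φ x| := by
  rw [show φ x = ((realEmb htr φ x : ℝ) : ℂ) from Complex.ext rfl (by simpa using htr φ x)]
  simp [Complex.norm_real]

lemma finite_realEmb : Finite (F →+* ℝ) := by
  have : Function.Injective (fun τ : F →+* ℝ => (Complex.ofRealHom.comp τ : F →+* ℂ)) := by
    intro τ σ h
    ext x
    have := congrArg (fun ψ : F →+* ℂ => (ψ x).re) h
    simpa using this
  exact Finite.of_injective _ this

/-- Every element of an order is integral over `ℤ`. -/
lemma order_int {a b : F} (R : Subring ℍ[F, a, b])
    (hO : ∀ c : 𝓞 F, algebraMap F ℍ[F, a, b] (algebraMap (𝓞 F) F c) ∈ R)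
    (hfg : (Submodule.span (𝓞 F) (R : Set ℍ[F, a, b])).FG) :
    ∀ x ∈ R, IsIntegral ℤ x := by
  have hsmul : ∀ (c : 𝓞 F) (x : ℍ[F,a,b]),
      c • x = (algebraMap F ℍ[F,a,b]) (algebraMap (𝓞 F) F c) * x := fun c x => by
    rw [← algebraMap_smul F c x, Algebra.smul_def]
  set N := Submodule.span (𝓞 F) (R : Set ℍ[F, a, b]) with hN
  have hcar : (N : Set ℍ[F,a,b]) = R := by
    apply subset_antisymm
    · intro x hx
      refine Submodule.span_induction (fun y hy => hy) (zero_mem R)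
        (fun y z _ _ hy hz => add_mem hy hz)
        (fun c y _ hy => by rw [hsmul]; exact mul_mem (hO c) hy) hx
    · exact Submodule.subset_span
  have hfin : Module.Finite (𝓞 F) ↥N := ⟨(Submodule.fg_top N).mpr hfg⟩
  have hfinZ : Module.Finite ℤ ↥N := Module.Finite.trans (𝓞 F) ↥N
  have hfgZ : (N.restrictScalars ℤ).FG := by
    have : Module.Finite ℤ ↥(N.restrictScalars ℤ) := hfinZ
    exact (Submodule.fg_top _).mp this.1
  intro x hx
  have hS : (subalgebraOfSubring R).toSubmodule = N.restrictScalars ℤ := by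
    ext y
    change y ∈ R ↔ _
    rw [Submodule.restrictScalars_mem]
    exact (Set.ext_iff.mp hcar y).symm
  exact IsIntegral.of_mem_of_fg (subalgebraOfSubring R) (hS ▸ hfgZ) x hx

/-- The reduced norm of an element of an order is integral over `ℤ`. -/
lemma qn_int {a b : F} (R : Subring ℍ[F, a, b])
    (hO : ∀ c : 𝓞 F, algebraMap F ℍ[F, a, b] (algebraMap (𝓞 F) F c) ∈ R)
    (hfg : (Submodule.span (𝓞 F) (R : Set ℍ[F, a, b])).FG) :
    ∀ x ∈ R, IsIntegral ℤ (qn x) := by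
  intro x hx
  have hst : ∀ r : ℤ, star (algebraMap ℤ ℍ[F,a,b] r) = algebraMap ℤ ℍ[F,a,b] r := fun r => by
    simp [map_intCast]
  have hxi : IsIntegral ℤ x := order_int R hO hfg x hx
  have hsi : IsIntegral ℤ (star x) := isIntegral_star_of hst hxi
  have hcomm : Commute x (star x) := by
    unfold Commute SemiconjBy
    rw [mul_star_eq, star_mul_eq]
  have hmul : IsIntegral ℤ (x * star x) := mul_int_of_comm hcomm hxi hsi
  rw [mul_star_eq] at hmul
  exact (isIntegral_algHom_iff ((algebraMap F ℍ[F,a,b]).toIntAlgHom)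
    (fun p q h => by
      have : (p : ℍ[F,a,b]) = (q : ℍ[F,a,b]) := by
        rwa [show ((algebraMap F ℍ[F,a,b]).toIntAlgHom : F → ℍ[F,a,b]) =
          algebraMap F ℍ[F,a,b] from rfl, QuaternionAlgebra.coe_algebraMap] at h
      exact congrArg QuaternionAlgebra.re this)).mp hmul

end AuxNF

lemma sq_bound_aux {A t C K : ℝ} (hA : 0 < A) (h : A * t ≤ C) (ht : 0 ≤ t) (hK : A⁻¹ ≤ K) :
    t ≤ C * K := by
  have hC0 : 0 ≤ C := le_trans (by positivity) h
  have h1 : t ≤ A⁻¹ * C := by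
    rw [← mul_le_mul_iff_right₀ hA, ← mul_assoc, mul_inv_cancel₀ hA.ne', one_mul]
    exact h
  calc t ≤ A⁻¹ * C := h1
    _ ≤ K * C := mul_le_mul_of_nonneg_right hK hC0
    _ = C * K := mul_comm _ _


/-- for an `𝒪`-order `R` in a totally definite quaternion algebra
`B = ℍ[F,a,b]` over a totally real number field `F`, the quotient `R^×/𝒪^×` of the
unit group of `R` by the (central) unit group of `𝒪` is finite. -/
theorem statement_6
    (F : Type*) [Field F] [NumberField F]
    (htr : ∀ φ : F →+* ℂ, ∀ x : F, (φ x).im = 0)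
    (a b : F) (ha0 : a ≠ 0) (hb0 : b ≠ 0)
    (ha : ∀ τ : F →+* ℝ, τ a < 0) (hb : ∀ τ : F →+* ℝ, τ b < 0)
    (R : Subring ℍ[F, a, b])
    -- `R` contains `𝒪` (embedded as scalars):
    (hO : ∀ c : 𝓞 F, algebraMap F ℍ[F, a, b] (algebraMap (𝓞 F) F c) ∈ R)
    -- `R` is finitely generated as an `𝒪`-module:
    (hfg : (Submodule.span (𝓞 F) (R : Set ℍ[F, a, b])).FG)
    -- `R` spans `B` over `F`:
    (hspan : Submodule.span F (R : Set ℍ[F, a, b]) = ⊤) :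
    Finite (Rˣ ⧸ (Units.map (RingHom.codRestrict
      ((algebraMap F ℍ[F, a, b]).comp (algebraMap (𝓞 F) F)) R hO).toMonoidHom).range) := by
  classical
  set cd := RingHom.codRestrict ((algebraMap F ℍ[F, a, b]).comp (algebraMap (𝓞 F) F)) R hO
    with hcd
  set Hsub := (Units.map cd.toMonoidHom).range with hHsub
  have _finR : Finite (F →+* ℝ) := finite_realEmb
  have _ftR : Fintype (F →+* ℝ) := Fintype.ofFinite _
  have _fgU : Group.FG (𝓞 F)ˣ := Group.fg_iff_monoid_fg.mpr inferInstance
  obtain ⟨T, hT⟩ := exists_sqcl (𝓞 F)ˣ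
  -- the constant bounding conjugates of the norms of the representatives
  set C : NNReal :=
    T.sup (fun ν => Finset.univ.sup fun τ : F →+* ℝ => ‖τ (algebraMap (𝓞 F) F ↑ν)‖₊) with hCdef
  have hC : ∀ ν ∈ T, ∀ τ : F →+* ℝ, τ (algebraMap (𝓞 F) F ↑ν) ≤ (C : ℝ) := by
    intro ν hν τ
    refine le_trans (le_abs_self _) ?_
    have h2 : ‖τ (algebraMap (𝓞 F) F ↑ν)‖₊ ≤ C := by
      refine le_trans (Finset.le_sup (f := fun τ : F →+* ℝ => ‖τ (algebraMap (𝓞 F) F ↑ν)‖₊)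
        (Finset.mem_univ τ)) ?_
      exact Finset.le_sup (f := fun ν : (𝓞 F)ˣ =>
        Finset.univ.sup fun τ : F →+* ℝ => ‖τ (algebraMap (𝓞 F) F ↑ν)‖₊) hν
    calc |τ (algebraMap (𝓞 F) F ↑ν)| = (‖τ (algebraMap (𝓞 F) F ↑ν)‖₊ : ℝ) := by
          rw [coe_nnnorm, Real.norm_eq_abs]
      _ ≤ (C : ℝ) := NNReal.coe_le_coe.mpr h2
  -- norms of units of `R` are units of `𝓞 F`
  have hunit : ∀ u : Rˣ, ∃ ε : (𝓞 F)ˣ,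
      algebraMap (𝓞 F) F ↑ε = qn (((u : R) : ℍ[F, a, b])) := by
    intro u
    have e1 : IsIntegral ℤ (qn (((u : R) : ℍ[F, a, b]))) := qn_int R hO hfg _ (u : R).2
    have e2 : IsIntegral ℤ (qn (((u⁻¹ : Rˣ) : R) : ℍ[F, a, b])) := qn_int R hO hfg _ ((u⁻¹ : Rˣ) : R).2
    set y1 : 𝓞 F := ⟨_, e1⟩ with hy1
    set y2 : 𝓞 F := ⟨_, e2⟩ with hy2
    have hprod : y1 * y2 = 1 := by
      apply NumberField.RingOfIntegers.coe_injective
      have : (algebraMap (𝓞 F) F) (y1 * y2) = qn (((u : R) : ℍ[F, a, b]))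
          * qn (((u⁻¹ : Rˣ) : R) : ℍ[F, a, b]) := by
        rw [map_mul]; rfl
      rw [this, ← qn_mul]
      have hcoe : ((u : R) : ℍ[F, a, b]) * (((u⁻¹ : Rˣ) : R) : ℍ[F, a, b]) = 1 := by
        have : ((u * u⁻¹ : Rˣ) : R) = 1 := by rw [mul_inv_cancel]; rfl
        have h2 : (((u * u⁻¹ : Rˣ) : R) : ℍ[F, a, b]) = 1 := by rw [this]; rfl
        rwa [Units.val_mul, Subring.coe_mul] at h2
      rw [hcoe, qn_one, map_one]
    exact ⟨Units.mkOfMulEqOne y1 y2 hprod, rfl⟩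
  -- surjectivity of the bounded set onto the quotient
  set SS : Set Rˣ := {u : Rˣ | ∀ τ : F →+* ℝ, τ (qn (((u : R) : ℍ[F, a, b]))) ≤ (C : ℝ)}
    with hSS
  have hsurj : ∀ u : Rˣ, ∃ s ∈ SS, (QuotientGroup.mk s : Rˣ ⧸ Hsub) = QuotientGroup.mk u := by
    intro u
    obtain ⟨ε, hε⟩ := hunit u
    obtain ⟨ν, hν, η, hεν⟩ := hT ε
    set w : Rˣ := Units.map cd.toMonoidHom (η⁻¹) with hw
    refine ⟨u * w, ?_, QuotientGroup.mk_mul_of_mem u ⟨η⁻¹, rfl⟩⟩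
    have hwv : (((w : R) : ℍ[F, a, b])) =
        algebraMap F ℍ[F, a, b] (algebraMap (𝓞 F) F ↑(η⁻¹ : (𝓞 F)ˣ)) := rfl
    have hsv : ((((u * w : Rˣ) : R)) : ℍ[F, a, b]) =
        ((u : R) : ℍ[F, a, b]) * ((w : R) : ℍ[F, a, b]) := rfl
    have hqs : qn ((((u * w : Rˣ) : R)) : ℍ[F, a, b]) = algebraMap (𝓞 F) F ↑ν := by
      rw [hsv, qn_mul, hwv, qn_algebraMap, ← hε, ← map_pow, ← map_mul]
      congr 1
      have : ε * (η⁻¹ : (𝓞 F)ˣ) ^ 2 = ν := by rw [hεν]; group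
      calc (ε : 𝓞 F) * ((η⁻¹ : (𝓞 F)ˣ) : 𝓞 F) ^ 2 = ((ε * (η⁻¹ : (𝓞 F)ˣ) ^ 2 : (𝓞 F)ˣ) : 𝓞 F) := by
            rw [Units.val_mul, Units.val_pow_eq_pow_val]
        _ = (ν : 𝓞 F) := by rw [this]
    intro τ
    rw [hqs]
    exact hC ν hν τ
  -- common denominator for the coordinates of elements of `R`
  obtain ⟨gens, hgens⟩ := hfg
  set coords : Finset F := ((gens.image (fun x => x.re) ∪ gens.image (fun x => x.imI))
    ∪ gens.image (fun x => x.imJ)) ∪ gens.image (fun x => x.imK) with hcoords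
  obtain ⟨d, hd⟩ := IsLocalization.exist_integer_multiples_of_finset
    (nonZeroDivisors (𝓞 F)) coords
  set dF : F := algebraMap (𝓞 F) F ↑d with hdFdef
  have hdF0 : dF ≠ 0 := by
    rw [hdFdef, map_ne_zero_iff _ NumberField.RingOfIntegers.coe_injective]
    exact nonZeroDivisors.coe_ne_zero d
  have hden : ∀ x ∈ R, (IsLocalization.IsInteger (𝓞 F) (dF * QuaternionAlgebra.re x))
      ∧ (IsLocalization.IsInteger (𝓞 F) (dF * QuaternionAlgebra.imI x))
      ∧ (IsLocalization.IsInteger (𝓞 F) (dF * QuaternionAlgebra.imJ x))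
      ∧ (IsLocalization.IsInteger (𝓞 F) (dF * QuaternionAlgebra.imK x)) := by
    have hsm : ∀ (c : 𝓞 F) (y : F), c • y = algebraMap (𝓞 F) F c * y := fun c y =>
      Algebra.smul_def c y
    have hdd : ∀ y ∈ coords, IsLocalization.IsInteger (𝓞 F) (dF * y) := by
      intro y hy
      have := hd y hy
      rwa [hsm] at this
    intro x hx
    have hx' : x ∈ Submodule.span (𝓞 F) (gens : Set ℍ[F,a,b]) := by
      rw [hgens]; exact Submodule.subset_span hx
    refine Submodule.span_induction ?_ ?_ ?_ ?_ hx'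
    · intro y hy
      have hy' : y ∈ gens := hy
      refine ⟨hdd _ ?_, hdd _ ?_, hdd _ ?_, hdd _ ?_⟩ <;> rw [hcoords]
      · exact Finset.mem_union_left _ (Finset.mem_union_left _
          (Finset.mem_union_left _ (Finset.mem_image_of_mem _ hy')))
      · exact Finset.mem_union_left _ (Finset.mem_union_left _
          (Finset.mem_union_right _ (Finset.mem_image_of_mem _ hy')))
      · exact Finset.mem_union_left _ (Finset.mem_union_right _ (Finset.mem_image_of_mem _ hy'))
      · exact Finset.mem_union_right _ (Finset.mem_image_of_mem _ hy')
    · simp only [QuaternionAlgebra.re_zero, QuaternionAlgebra.imI_zero,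
        QuaternionAlgebra.imJ_zero, QuaternionAlgebra.imK_zero, mul_zero]
      exact ⟨IsLocalization.isInteger_zero, IsLocalization.isInteger_zero,
        IsLocalization.isInteger_zero, IsLocalization.isInteger_zero⟩
    · intro y z _ _ hy hz
      simp only [QuaternionAlgebra.re_add, QuaternionAlgebra.imI_add,
        QuaternionAlgebra.imJ_add, QuaternionAlgebra.imK_add, mul_add]
      exact ⟨IsLocalization.isInteger_add hy.1 hz.1, IsLocalization.isInteger_add hy.2.1 hz.2.1,
        IsLocalization.isInteger_add hy.2.2.1 hz.2.2.1,
        IsLocalization.isInteger_add hy.2.2.2 hz.2.2.2⟩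
    · intro c y _ hy
      have hco : ∀ t : F, dF * (c • t) = algebraMap (𝓞 F) F c * (dF * t) := fun t => by
        rw [hsm]; ring
      simp only [QuaternionAlgebra.re_smul, QuaternionAlgebra.imI_smul,
        QuaternionAlgebra.imJ_smul, QuaternionAlgebra.imK_smul, hco]
      exact ⟨IsLocalization.isInteger_mul ⟨c, rfl⟩ hy.1,
        IsLocalization.isInteger_mul ⟨c, rfl⟩ hy.2.1,
        IsLocalization.isInteger_mul ⟨c, rfl⟩ hy.2.2.1,
        IsLocalization.isInteger_mul ⟨c, rfl⟩ hy.2.2.2⟩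
  -- constants for the coordinate bounds
  set Ka : NNReal := Finset.univ.sup (fun τ : F →+* ℝ => ‖(τ a)⁻¹‖₊) with hKadef
  set Kb : NNReal := Finset.univ.sup (fun τ : F →+* ℝ => ‖(τ b)⁻¹‖₊) with hKbdef
  set Kab : NNReal := Finset.univ.sup (fun τ : F →+* ℝ => ‖(τ a * τ b)⁻¹‖₊) with hKabdef
  set Md : NNReal := Finset.univ.sup (fun φ : F →+* ℂ => ‖φ dF‖₊) with hMddef
  set K : NNReal := ((1 ⊔ Ka) ⊔ Kb) ⊔ Kab with hKdef
  set B0 : ℝ := (Md : ℝ) * Real.sqrt ((C : ℝ) * (K : ℝ)) with hB0def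
  have hKaK : ∀ τ : F →+* ℝ, (-(τ a))⁻¹ ≤ (K : ℝ) := by
    intro τ
    have h1 : (-(τ a))⁻¹ = |(τ a)⁻¹| := by rw [abs_inv, abs_of_neg (ha τ)]
    have h2a : ‖(τ a)⁻¹‖₊ ≤ Ka := by rw [hKadef]; exact Finset.le_sup (f := fun τ : F →+* ℝ => ‖(τ a)⁻¹‖₊) (Finset.mem_univ τ)
    have h2 : ‖(τ a)⁻¹‖₊ ≤ K := le_trans h2a (le_sup_of_le_left (le_sup_of_le_left le_sup_right))
    rw [h1, ← Real.norm_eq_abs, ← coe_nnnorm]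
    exact_mod_cast h2
  have hKbK : ∀ τ : F →+* ℝ, (-(τ b))⁻¹ ≤ (K : ℝ) := by
    intro τ
    have h1 : (-(τ b))⁻¹ = |(τ b)⁻¹| := by rw [abs_inv, abs_of_neg (hb τ)]
    have h2a : ‖(τ b)⁻¹‖₊ ≤ Kb := by rw [hKbdef]; exact Finset.le_sup (f := fun τ : F →+* ℝ => ‖(τ b)⁻¹‖₊) (Finset.mem_univ τ)
    have h2 : ‖(τ b)⁻¹‖₊ ≤ K := le_trans h2a (le_sup_of_le_left le_sup_right)
    rw [h1, ← Real.norm_eq_abs, ← coe_nnnorm]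
    exact_mod_cast h2
  have hKabK : ∀ τ : F →+* ℝ, (τ a * τ b)⁻¹ ≤ (K : ℝ) := by
    intro τ
    have hpos : 0 < τ a * τ b := mul_pos_of_neg_of_neg (ha τ) (hb τ)
    have h1 : (τ a * τ b)⁻¹ = |(τ a * τ b)⁻¹| := (abs_of_pos (by positivity)).symm
    have h2a : ‖(τ a * τ b)⁻¹‖₊ ≤ Kab := by rw [hKabdef]; exact Finset.le_sup (f := fun τ : F →+* ℝ => ‖(τ a * τ b)⁻¹‖₊) (Finset.mem_univ τ)
    have h2 : ‖(τ a * τ b)⁻¹‖₊ ≤ K := le_trans h2a le_sup_right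
    rw [h1, ← Real.norm_eq_abs, ← coe_nnnorm]
    exact_mod_cast h2
  have hMd : ∀ φ : F →+* ℂ, ‖φ dF‖ ≤ (Md : ℝ) := by
    intro φ
    have h2 : ‖φ dF‖₊ ≤ Md := by rw [hMddef]; exact Finset.le_sup (f := fun φ : F →+* ℂ => ‖φ dF‖₊) (Finset.mem_univ φ)
    rw [← coe_nnnorm]
    exact_mod_cast h2
  have hK1 : (1 : NNReal) ≤ K :=
    le_sup_of_le_left (le_sup_of_le_left le_sup_left)
  -- coordinate bounds for elements of `SS`
  have hbnd : ∀ u ∈ SS, ∀ τ : F →+* ℝ,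
      (τ (QuaternionAlgebra.re (((u : R) : ℍ[F,a,b]))))^2 ≤ (C : ℝ) * (K : ℝ)
      ∧ (τ (QuaternionAlgebra.imI (((u : R) : ℍ[F,a,b]))))^2 ≤ (C : ℝ) * (K : ℝ)
      ∧ (τ (QuaternionAlgebra.imJ (((u : R) : ℍ[F,a,b]))))^2 ≤ (C : ℝ) * (K : ℝ)
      ∧ (τ (QuaternionAlgebra.imK (((u : R) : ℍ[F,a,b]))))^2 ≤ (C : ℝ) * (K : ℝ) := by
    intro u hu τ
    have e := qn_apply τ (((u : R) : ℍ[F,a,b]))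
    have pA : (0:ℝ) < -(τ a) := neg_pos.mpr (ha τ)
    have pB : (0:ℝ) < -(τ b) := neg_pos.mpr (hb τ)
    have pAB : (0:ℝ) < τ a * τ b := mul_pos_of_neg_of_neg (ha τ) (hb τ)
    have hC' : τ (qn (((u : R) : ℍ[F,a,b]))) ≤ (C : ℝ) := hu τ
    have hCK : (C : ℝ) ≤ (C : ℝ) * (K : ℝ) := by
      refine le_mul_of_one_le_right (by positivity) ?_
      exact_mod_cast hK1
    refine ⟨?_, ?_, ?_, ?_⟩
    · nlinarith [mul_nonneg pA.le (sq_nonneg (τ (QuaternionAlgebra.imI (((u : R) : ℍ[F,a,b]))))),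
        mul_nonneg pB.le (sq_nonneg (τ (QuaternionAlgebra.imJ (((u : R) : ℍ[F,a,b]))))),
        mul_nonneg pAB.le (sq_nonneg (τ (QuaternionAlgebra.imK (((u : R) : ℍ[F,a,b])))))]
    · refine sq_bound_aux (C := (C : ℝ)) pA ?_ (sq_nonneg _) (hKaK τ)
      nlinarith [sq_nonneg (τ (QuaternionAlgebra.re (((u : R) : ℍ[F,a,b])))),
        mul_nonneg pB.le (sq_nonneg (τ (QuaternionAlgebra.imJ (((u : R) : ℍ[F,a,b]))))),
        mul_nonneg pAB.le (sq_nonneg (τ (QuaternionAlgebra.imK (((u : R) : ℍ[F,a,b])))))]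
    · refine sq_bound_aux (C := (C : ℝ)) pB ?_ (sq_nonneg _) (hKbK τ)
      nlinarith [sq_nonneg (τ (QuaternionAlgebra.re (((u : R) : ℍ[F,a,b])))),
        mul_nonneg pA.le (sq_nonneg (τ (QuaternionAlgebra.imI (((u : R) : ℍ[F,a,b]))))),
        mul_nonneg pAB.le (sq_nonneg (τ (QuaternionAlgebra.imK (((u : R) : ℍ[F,a,b])))))]
    · refine sq_bound_aux (C := (C : ℝ)) pAB ?_ (sq_nonneg _) (hKabK τ)
      nlinarith [sq_nonneg (τ (QuaternionAlgebra.re (((u : R) : ℍ[F,a,b])))),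
        mul_nonneg pA.le (sq_nonneg (τ (QuaternionAlgebra.imI (((u : R) : ℍ[F,a,b]))))),
        mul_nonneg pB.le (sq_nonneg (τ (QuaternionAlgebra.imJ (((u : R) : ℍ[F,a,b])))))]
  have habs : ∀ t : ℝ, t^2 ≤ (C : ℝ) * (K : ℝ) → |t| ≤ Real.sqrt ((C : ℝ) * (K : ℝ)) := by
    intro t h
    rw [← Real.sqrt_sq_eq_abs]
    exact Real.sqrt_le_sqrt h
  -- the finite set of possible coordinates
  set S0 : Set F := {y : F | IsIntegral ℤ y ∧ ∀ φ : F →+* ℂ, ‖φ y‖ ≤ B0} with hS0def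
  have hS0 : S0.Finite := NumberField.Embeddings.finite_of_norm_le F ℂ B0
  set f : Rˣ → F × F × F × F := fun u =>
    (dF * QuaternionAlgebra.re (((u : R) : ℍ[F,a,b])),
     (dF * QuaternionAlgebra.imI (((u : R) : ℍ[F,a,b])),
      (dF * QuaternionAlgebra.imJ (((u : R) : ℍ[F,a,b])),
       dF * QuaternionAlgebra.imK (((u : R) : ℍ[F,a,b]))))) with hfdef
  have hcoordS0 : ∀ u ∈ SS, ∀ (t : F),
      (IsLocalization.IsInteger (𝓞 F) (dF * t)) → (∀ τ : F →+* ℝ, (τ t)^2 ≤ (C : ℝ) * (K : ℝ)) →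
      dF * t ∈ S0 := by
    intro u hu t hint hbt
    constructor
    · obtain ⟨y, hy⟩ := hint
      rw [← hy]
      exact NumberField.RingOfIntegers.isIntegral_coe y
    · intro φ
      rw [map_mul, norm_mul, hB0def]
      refine mul_le_mul (hMd φ) ?_ (norm_nonneg _) (NNReal.coe_nonneg Md)
      rw [realEmb_norm htr φ t]
      exact habs _ (hbt (realEmb htr φ))
  have hfim : ∀ u ∈ SS, f u ∈ S0 ×ˢ (S0 ×ˢ (S0 ×ˢ S0)) := by
    intro u hu
    obtain ⟨h1, h2, h3, h4⟩ := hden _ (u : R).2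
    exact ⟨hcoordS0 u hu _ h1 (fun τ => (hbnd u hu τ).1),
      hcoordS0 u hu _ h2 (fun τ => (hbnd u hu τ).2.1),
      hcoordS0 u hu _ h3 (fun τ => (hbnd u hu τ).2.2.1),
      hcoordS0 u hu _ h4 (fun τ => (hbnd u hu τ).2.2.2)⟩
  have hinj : Set.InjOn f SS := by
    intro u _ v _ huv
    rw [hfdef] at huv
    simp only [Prod.mk.injEq] at huv
    obtain ⟨e1, e2, e3, e4⟩ := huv
    have hval : (((u : R) : ℍ[F,a,b])) = (((v : R) : ℍ[F,a,b])) := by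
      ext
      · exact mul_left_cancel₀ hdF0 e1
      · exact mul_left_cancel₀ hdF0 e2
      · exact mul_left_cancel₀ hdF0 e3
      · exact mul_left_cancel₀ hdF0 e4
    exact Units.ext (Subtype.ext hval)
  have hSSfin : SS.Finite := by
    refine Set.Finite.of_finite_image ?_ hinj
    refine Set.Finite.subset (hS0.prod (hS0.prod (hS0.prod hS0))) ?_
    rintro p ⟨u, hu, rfl⟩
    exact hfim u hu
  have : Finite ↥SS := hSSfin.to_subtype
  refine Finite.of_surjective (fun v : ↥SS => (QuotientGroup.mk v.1 : Rˣ ⧸ Hsub)) ?_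
  intro q
  obtain ⟨u, rfl⟩ := QuotientGroup.mk_surjective q
  obtain ⟨s, hsS, hq⟩ := hsurj u
  exact ⟨⟨s, hsS⟩, hq⟩
end

section
/- Let x ∈ B̂^× and v ∈ V, and assume that the set Γ_{x,y} is finite for every y ∈ B̂^×. Then: (i) the function φ_{x,v} : B̂^× → V, φ_{x,v}(y) = Σ_{γ ∈ Γ_{x,y}} v·γ, is a quaternionic modular form of weight ρ and level R, i.e. φ_{x,v}(u y γ) = φ_{x,v}(y)·γ for all u ∈ R̂^×, γ ∈ B^×, y ∈ B̂^×; (ii) for every u ∈ R̂^× and γ ∈ B^×, each set Γ_{uxγ, y} is finite and φ_{uxγ, v} = φ_{x, v·γ⁻¹}. -/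
open NumberField Quaternion IsDedekindDomain

noncomputable section

/-- The finite adele ring of a number field. -/
abbrev Adeles (F : Type*) [Field F] [NumberField F] : Type _ :=
  FiniteAdeleRing (𝓞 F) F

/-- The adelization `B ⊗_F 𝔸`, modelled as a quaternion algebra over the adeles. -/
abbrev Bhat (F : Type*) [Field F] [NumberField F] (a b : F) : Type _ :=
  ℍ[Adeles F, algebraMap F (Adeles F) a, algebraMap F (Adeles F) b]

/-- The canonical quaternionic basis of `Bhat`. -/
def quatBasis (F : Type*) [Field F] [NumberField F] (a b : F) :
    QuaternionAlgebra.Basis (Bhat F a b) a 0 b where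
  i := ⟨0, 1, 0, 0⟩
  j := ⟨0, 0, 1, 0⟩
  k := ⟨0, 0, 0, 1⟩
  i_mul_i := by
    ext <;> simp [QuaternionAlgebra.ext_iff, Algebra.smul_def] <;> rfl
  j_mul_j := by
    ext <;> simp [QuaternionAlgebra.ext_iff, Algebra.smul_def] <;> rfl
  i_mul_j := by
    ext <;> simp
  j_mul_i := by
    ext <;> simp

/-- The canonical embedding `B → B̂`. -/
def iotaB (F : Type*) [Field F] [NumberField F] (a b : F) :
    ℍ[F, a, b] →ₐ[F] Bhat F a b :=
  (quatBasis F a b).liftHom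

/-- The integral adeles `Ô` inside the finite adeles. -/
def intAdeles (F : Type*) [Field F] [NumberField F] : Set (Adeles F) :=
  {x | ∀ v : HeightOneSpectrum (𝓞 F), x v ∈ v.adicCompletionIntegers F}

variable {F : Type*} [Field F] [NumberField F] {a b : F}

/-- `R̂`, the image of `R ⊗_𝒪 Ô` in `B̂`. -/
def Rhat (R : Subring ℍ[F, a, b]) : Subring (Bhat F a b) :=
  Subring.closure
    {z | ∃ r ∈ R, ∃ o ∈ intAdeles F,
      z = algebraMap (Adeles F) (Bhat F a b) o * iotaB F a b r}

/-- `R̂ˣ` as a subgroup of `B̂ˣ`. -/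
def Uhat (R : Subring ℍ[F, a, b]) : Subgroup (Bhat F a b)ˣ :=
  (Units.map (Rhat R).subtype.toMonoidHom).range

/-- The embedding `B^× → B̂^×`. -/
def gmap (F : Type*) [Field F] [NumberField F] (a b : F) :
    ℍ[F, a, b]ˣ →* (Bhat F a b)ˣ :=
  Units.map (iotaB F a b).toRingHom.toMonoidHom

/-- `𝒪^×` as a subgroup of `B^×`. -/
def OunitsB (F : Type*) [Field F] [NumberField F] (a b : F) : Subgroup ℍ[F, a, b]ˣ :=
  (Units.map ((algebraMap F ℍ[F, a, b]).comp (algebraMap (𝓞 F) F)).toMonoidHom).range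

/-- The set `B^× ∩ x⁻¹ R̂^× y` (inside `B^×`). -/
def GammaSet (R : Subring ℍ[F, a, b]) (x y : (Bhat F a b)ˣ) : Set ℍ[F, a, b]ˣ :=
  {γ | ∃ u ∈ Uhat R, gmap F a b γ = x⁻¹ * u * y}

/-- `T` is a (finite) set of representatives for `Γ_{x,y} = (B^× ∩ x⁻¹ R̂^× y)/𝒪^×`. -/
def IsGammaReps (R : Subring ℍ[F, a, b]) (x y : (Bhat F a b)ˣ)
    (T : Finset ℍ[F, a, b]ˣ) : Prop :=
  ↑T ⊆ GammaSet R x y ∧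
    ∀ γ ∈ GammaSet R x y, ∃! γ' : ℍ[F, a, b]ˣ,
      γ' ∈ T ∧ ∃ ε ∈ OunitsB F a b, γ = γ' * ε

variable {V : Type*} [AddCommGroup V] [Module ℂ V]

/-- `(V, act)` is a unitary right representation of `B^×/F^×`. -/
def IsWeightRep (F : Type*) [Field F] [NumberField F] (a b : F)
    (act : V → ℍ[F, a, b]ˣ → V) : Prop :=
  (∀ v, act v 1 = v) ∧
  (∀ v γ₁ γ₂, act (act v γ₁) γ₂ = act v (γ₁ * γ₂)) ∧
  (∀ γ, IsLinearMap ℂ (fun v => act v γ)) ∧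
  (∀ (v : V) (c : Fˣ), act v (Units.map (algebraMap F ℍ[F, a, b]).toMonoidHom c) = v)

/-- `φ` is the quaternionic modular form `φ_{x,v}`. -/
def IsPhi (R : Subring ℍ[F, a, b]) (act : V → ℍ[F, a, b]ˣ → V)
    (x : (Bhat F a b)ˣ) (v : V) (φ : (Bhat F a b)ˣ → V) : Prop :=
  ∀ y : (Bhat F a b)ˣ, ∃ T : Finset ℍ[F, a, b]ˣ,
    IsGammaReps R x y T ∧ φ y = ∑ γ ∈ T, act v γ

/-- `φ` is a quaternionic modular form of weight `act` and level `R`. -/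
def IsQMF (R : Subring ℍ[F, a, b]) (act : V → ℍ[F, a, b]ˣ → V)
    (φ : (Bhat F a b)ˣ → V) : Prop :=
  ∀ u ∈ Uhat R, ∀ (γ : ℍ[F, a, b]ˣ) (y : (Bhat F a b)ˣ),
    φ (u * y * gmap F a b γ) = act (φ y) γ

/-- `z` normalizes `R̂`. -/
def Normalizes (R : Subring ℍ[F, a, b]) (z : (Bhat F a b)ˣ) : Prop :=
  (fun w => ((z⁻¹ : (Bhat F a b)ˣ) : Bhat F a b) * w * (z : Bhat F a b)) ''
      ((Rhat R : Set (Bhat F a b))) = (Rhat R : Set (Bhat F a b))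

/-- The order `R_x = B ∩ x⁻¹ R̂ x`. -/
def Rx (R : Subring ℍ[F, a, b]) (x : (Bhat F a b)ˣ) : Set ℍ[F, a, b] :=
  {w | ∃ r ∈ Rhat R, iotaB F a b w = ((x⁻¹ : (Bhat F a b)ˣ) : Bhat F a b) * r * (x : Bhat F a b)}

/-- The unit group `R_x^×` inside `B^×`. -/
def RxUnits (R : Subring ℍ[F, a, b]) (x : (Bhat F a b)ˣ) : Set ℍ[F, a, b]ˣ :=
  {γ | ((γ : ℍ[F, a, b]) ∈ Rx R x) ∧ (((γ⁻¹ : ℍ[F, a, b]ˣ) : ℍ[F, a, b]) ∈ Rx R x)}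

/-- `T` is a set of representatives for `Γ_x = R_x^×/𝒪^×`; in particular `t_x = T.card`. -/
def IsStabReps (R : Subring ℍ[F, a, b]) (x : (Bhat F a b)ˣ)
    (T : Finset ℍ[F, a, b]ˣ) : Prop :=
  ↑T ⊆ RxUnits R x ∧
    ∀ γ ∈ RxUnits R x, ∃! γ' : ℍ[F, a, b]ˣ,
      γ' ∈ T ∧ ∃ ε ∈ OunitsB F a b, γ = γ' * ε

/-- `xs` is a set of representatives for `Cl(R) = R̂^× \ B̂^× / B^×`. -/
def IsClassReps (R : Subring ℍ[F, a, b]) (xs : Finset (Bhat F a b)ˣ) : Prop :=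
  ∀ y : (Bhat F a b)ˣ, ∃! x : (Bhat F a b)ˣ,
    x ∈ xs ∧ ∃ u ∈ Uhat R, ∃ γ : ℍ[F, a, b]ˣ, y = u * x * gmap F a b γ

/-- The reduced norm of a quaternion over a commutative ring. -/
def nrd {R : Type*} [CommRing R] {c₁ c₂ : R} (x : ℍ[R, c₁, c₂]) : R :=
  x.re ^ 2 - c₁ * x.imI ^ 2 - c₂ * x.imJ ^ 2 + c₁ * c₂ * x.imK ^ 2

/-- The set `H_𝔪 = {h ∈ B̂^× ∩ R̂ : Ô·n(h) ∩ 𝒪 = 𝔪}`. -/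
def Hset (R : Subring ℍ[F, a, b]) (𝔪 : Ideal (𝓞 F)) : Set (Bhat F a b)ˣ :=
  {h | ((h : Bhat F a b) ∈ Rhat R) ∧
    {c : 𝓞 F | ∃ o ∈ intAdeles F,
        algebraMap F (Adeles F) (algebraMap (𝓞 F) F c) = o * nrd (h : Bhat F a b)}
      = (𝔪 : Set (𝓞 F))}

/-- `T` is a set of representatives for the left cosets `R̂^× \ H_𝔪`. -/
def IsHeckeLeftReps (R : Subring ℍ[F, a, b]) (𝔪 : Ideal (𝓞 F))
    (T : Finset (Bhat F a b)ˣ) : Prop :=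
  ↑T ⊆ Hset R 𝔪 ∧
    ∀ h ∈ Hset R 𝔪, ∃! h' : (Bhat F a b)ˣ, h' ∈ T ∧ ∃ u ∈ Uhat R, h = u * h'

/-- `T` is a set of representatives for the right cosets `H_𝔪 / R̂^×`. -/
def IsHeckeRightReps (R : Subring ℍ[F, a, b]) (𝔪 : Ideal (𝓞 F))
    (T : Finset (Bhat F a b)ˣ) : Prop :=
  ↑T ⊆ Hset R 𝔪 ∧
    ∀ h ∈ Hset R 𝔪, ∃! h' : (Bhat F a b)ˣ, h' ∈ T ∧ ∃ u ∈ Uhat R, h = h' * u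

end


section statement7aux

variable {F : Type*} [Field F] [NumberField F] {a b : F}
variable {V : Type*} [AddCommGroup V] [Module ℂ V]

noncomputable instance : DecidableEq ℍ[F, a, b]ˣ := Classical.decEq _

/-- `T` is a set of representatives for `S/𝒪^×`. -/
def RepsOf (S : Set ℍ[F, a, b]ˣ) (T : Finset ℍ[F, a, b]ˣ) : Prop :=
  ↑T ⊆ S ∧ ∀ γ ∈ S, ∃! γ' : ℍ[F, a, b]ˣ,
      γ' ∈ T ∧ ∃ ε ∈ OunitsB F a b, γ = γ' * ε

lemma isGammaReps_iff_repsOf (R : Subring ℍ[F, a, b]) (x y : (Bhat F a b)ˣ)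
    (T : Finset ℍ[F, a, b]ˣ) : IsGammaReps R x y T ↔ RepsOf (GammaSet R x y) T :=
  Iff.rfl

lemma ounits_comm {ε : ℍ[F, a, b]ˣ} (hε : ε ∈ OunitsB F a b) (g : ℍ[F, a, b]ˣ) :
    g * ε = ε * g := by
  obtain ⟨c, rfl⟩ := hε
  apply Units.ext
  show (g : ℍ[F, a, b]) * algebraMap F ℍ[F, a, b] (algebraMap (𝓞 F) F c) =
    algebraMap F ℍ[F, a, b] (algebraMap (𝓞 F) F c) * (g : ℍ[F, a, b])
  exact (Algebra.commutes _ _).symm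

lemma act_ounits {act : V → ℍ[F, a, b]ˣ → V} (hact : IsWeightRep F a b act)
    (v : V) {ε : ℍ[F, a, b]ˣ} (hε : ε ∈ OunitsB F a b) : act v ε = v := by
  obtain ⟨c, rfl⟩ := hε
  have e : (Units.map ((algebraMap F ℍ[F, a, b]).comp (algebraMap (𝓞 F) F)).toMonoidHom c)
      = Units.map (algebraMap F ℍ[F, a, b]).toMonoidHom
          (Units.map (algebraMap (𝓞 F) F).toMonoidHom c) := Units.ext rfl
  rw [e]
  exact hact.2.2.2 v _

/-- For `γ ∈ S`, the chosen representative in `T` together with its properties. -/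
lemma rep_spec {S : Set ℍ[F, a, b]ˣ} {T : Finset ℍ[F, a, b]ˣ} (hT : RepsOf S T)
    {γ : ℍ[F, a, b]ˣ} (hγ : γ ∈ S) :
    ∃ γ', (γ' ∈ T ∧ ∃ ε ∈ OunitsB F a b, γ = γ' * ε) ∧
      ∀ γ'', (γ'' ∈ T ∧ ∃ ε ∈ OunitsB F a b, γ = γ'' * ε) → γ'' = γ' := by
  obtain ⟨γ', hP, huniq⟩ := hT.2 γ hγ
  exact ⟨γ', hP, huniq⟩

lemma sum_repsOf_congr {act : V → ℍ[F, a, b]ˣ → V} (hact : IsWeightRep F a b act)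
    {S : Set ℍ[F, a, b]ˣ} {T₁ T₂ : Finset ℍ[F, a, b]ˣ}
    (h₁ : RepsOf S T₁) (h₂ : RepsOf S T₂) (v : V) :
    ∑ γ ∈ T₁, act v γ = ∑ γ ∈ T₂, act v γ := by
  refine Finset.sum_bij'
    (fun γ hγ => (rep_spec h₂ (h₁.1 hγ)).choose)
    (fun γ hγ => (rep_spec h₁ (h₂.1 hγ)).choose) ?_ ?_ ?_ ?_ ?_
  · intro γ hγ; exact (rep_spec h₂ (h₁.1 hγ)).choose_spec.1.1
  · intro γ hγ; exact (rep_spec h₁ (h₂.1 hγ)).choose_spec.1.1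
  · intro γ hγ
    obtain ⟨⟨hmem, ε, hε, hεe⟩, -⟩ := (rep_spec h₂ (h₁.1 hγ)).choose_spec
    exact ((rep_spec h₁ (h₂.1 hmem)).choose_spec.2 γ
      ⟨hγ, ε⁻¹, (OunitsB F a b).inv_mem hε, eq_mul_inv_of_mul_eq hεe.symm⟩).symm
  · intro γ hγ
    obtain ⟨⟨hmem, ε, hε, hεe⟩, -⟩ := (rep_spec h₁ (h₂.1 hγ)).choose_spec
    exact ((rep_spec h₂ (h₁.1 hmem)).choose_spec.2 γ
      ⟨hγ, ε⁻¹, (OunitsB F a b).inv_mem hε, eq_mul_inv_of_mul_eq hεe.symm⟩).symm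
  · intro γ hγ
    obtain ⟨⟨hmem, ε, hε, hεe⟩, -⟩ := (rep_spec h₂ (h₁.1 hγ)).choose_spec
    refine (congrArg (act v) hεe).trans ?_
    rw [← hact.2.1]
    exact act_ounits hact _ hε

lemma repsOf_image {S S' : Set ℍ[F, a, b]ˣ} (f : ℍ[F, a, b]ˣ ≃ ℍ[F, a, b]ˣ)
    (hfS : ∀ γ, f γ ∈ S' ↔ γ ∈ S)
    (hcomm : ∀ g ε, ε ∈ OunitsB F a b → f (g * ε) = f g * ε)
    {T : Finset ℍ[F, a, b]ˣ} (hT : RepsOf S T) :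
    RepsOf S' (T.image f) := by
  constructor
  · intro δ hδ
    simp only [Finset.coe_image, Set.mem_image, Finset.mem_coe] at hδ
    obtain ⟨t, ht, rfl⟩ := hδ
    exact (hfS t).2 (hT.1 ht)
  · intro δ hδ
    have hγ : f.symm δ ∈ S := by
      have h := hfS (f.symm δ)
      rw [f.apply_symm_apply] at h
      exact h.1 hδ
    obtain ⟨t, ⟨htT, ε, hε, hεe⟩, huniq⟩ := hT.2 _ hγ
    refine ⟨f t, ⟨Finset.mem_image_of_mem f htT, ε, hε, ?_⟩, ?_⟩
    · have h : δ = f (t * ε) := by rw [← hεe, f.apply_symm_apply]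
      rw [h, hcomm t ε hε]
    · rintro t'' ⟨ht''T, ε'', hε'', hεe''⟩
      simp only [Finset.mem_image] at ht''T
      obtain ⟨t', ht'T, rfl⟩ := ht''T
      have h : f.symm δ = t' * ε'' := by
        rw [← hcomm t' ε'' hε''] at hεe''
        rw [hεe'', f.symm_apply_apply]
      rw [huniq t' ⟨ht'T, ε'', hε'', h⟩]

lemma gammaSet_mul_right {R : Subring ℍ[F, a, b]} {x u y : (Bhat F a b)ˣ}
    (hu : u ∈ Uhat R) (γ₀ γ : ℍ[F, a, b]ˣ) :
    γ * γ₀ ∈ GammaSet R x (u * y * gmap F a b γ₀) ↔ γ ∈ GammaSet R x y := by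
  constructor
  · rintro ⟨u', hu', h⟩
    refine ⟨u' * u, (Uhat R).mul_mem hu' hu, ?_⟩
    have h2 : gmap F a b γ * gmap F a b γ₀ =
        (x⁻¹ * (u' * u) * y) * gmap F a b γ₀ := by
      rw [← map_mul, h]; group
    exact mul_right_cancel h2
  · rintro ⟨w, hw, h⟩
    refine ⟨w * u⁻¹, (Uhat R).mul_mem hw ((Uhat R).inv_mem hu), ?_⟩
    rw [map_mul, h]; group

lemma gammaSet_mul_left {R : Subring ℍ[F, a, b]} {x u y : (Bhat F a b)ˣ}
    (hu : u ∈ Uhat R) (γ₀ γ : ℍ[F, a, b]ˣ) :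
    γ₀⁻¹ * γ ∈ GammaSet R (u * x * gmap F a b γ₀) y ↔ γ ∈ GammaSet R x y := by
  constructor
  · rintro ⟨u', hu', h⟩
    refine ⟨u⁻¹ * u', (Uhat R).mul_mem ((Uhat R).inv_mem hu) hu', ?_⟩
    have h2 : gmap F a b γ₀⁻¹ * gmap F a b γ =
        gmap F a b γ₀⁻¹ * (x⁻¹ * (u⁻¹ * u') * y) := by
      rw [← map_mul, h, map_inv]; group
    exact mul_left_cancel h2
  · rintro ⟨w, hw, h⟩
    refine ⟨u * w, (Uhat R).mul_mem hu hw, ?_⟩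
    rw [map_mul, map_inv, h]; group

end statement7aux

/-- `φ_{x,v}` is a quaternionic modular form of weight `ρ` and level `R`,
and `φ_{uxγ,v} = φ_{x,v·γ⁻¹}` for `u ∈ R̂^×`, `γ ∈ B^×`. -/
theorem statement_7
    {F : Type*} [Field F] [NumberField F]
    (htr : ∀ φ : F →+* ℂ, ∀ x : F, (φ x).im = 0)
    {a b : F} (ha0 : a ≠ 0) (hb0 : b ≠ 0)
    (ha : ∀ τ : F →+* ℝ, τ a < 0) (hb : ∀ τ : F →+* ℝ, τ b < 0)
    (R : Subring ℍ[F, a, b])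
    (hRO : ∀ c : NumberField.RingOfIntegers F,
      algebraMap F ℍ[F, a, b] (algebraMap (NumberField.RingOfIntegers F) F c) ∈ R)
    (hRfg : (Submodule.span (NumberField.RingOfIntegers F) (R : Set ℍ[F, a, b])).FG)
    (hRspan : Submodule.span F (R : Set ℍ[F, a, b]) = ⊤)
    {V : Type*} [AddCommGroup V] [Module ℂ V]
    (act : V → ℍ[F, a, b]ˣ → V) (hact : IsWeightRep F a b act)

    (x : (Bhat F a b)ˣ) (v : V)
    (hfin : ∀ y : (Bhat F a b)ˣ, ∃ T : Finset ℍ[F, a, b]ˣ, IsGammaReps R x y T)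
    (φ : (Bhat F a b)ˣ → V) (hφ : IsPhi R act x v φ) :
    IsQMF R act φ ∧
    ∀ u ∈ Uhat R, ∀ γ : ℍ[F, a, b]ˣ,
      (∀ y : (Bhat F a b)ˣ, ∃ T : Finset ℍ[F, a, b]ˣ,
        IsGammaReps R (u * x * gmap F a b γ) y T) ∧
      (∀ ψ : (Bhat F a b)ˣ → V, IsPhi R act (u * x * gmap F a b γ) v ψ →
        ∀ ψ' : (Bhat F a b)ˣ → V, IsPhi R act x (act v γ⁻¹) ψ' → ψ = ψ') := by
  have hlin : ∀ (γ₀ : ℍ[F, a, b]ˣ) (T : Finset ℍ[F, a, b]ˣ) (f : ℍ[F, a, b]ˣ → V),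
      act (∑ t ∈ T, f t) γ₀ = ∑ t ∈ T, act (f t) γ₀ := fun γ₀ T f =>
    map_sum (IsLinearMap.mk' _ (hact.2.2.1 γ₀)) f T
  constructor
  · -- φ is a quaternionic modular form
    intro u hu γ₀ y
    obtain ⟨T₁, hT₁, hval₁⟩ := hφ (u * y * gmap F a b γ₀)
    obtain ⟨T₂, hT₂, hval₂⟩ := hφ y
    have hreps : RepsOf (GammaSet R x (u * y * gmap F a b γ₀))
        (T₂.image (Equiv.mulRight γ₀)) :=
      repsOf_image (Equiv.mulRight γ₀)
        (fun γ => gammaSet_mul_right hu γ₀ γ)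
        (fun g ε hε => by
          show g * ε * γ₀ = g * γ₀ * ε
          rw [mul_assoc, ← ounits_comm hε γ₀, ← mul_assoc])
        ((isGammaReps_iff_repsOf _ _ _ _).1 hT₂)
    calc φ (u * y * gmap F a b γ₀)
        = ∑ δ ∈ T₁, act v δ := hval₁
      _ = ∑ δ ∈ T₂.image (Equiv.mulRight γ₀), act v δ :=
          sum_repsOf_congr hact ((isGammaReps_iff_repsOf _ _ _ _).1 hT₁) hreps v
      _ = ∑ t ∈ T₂, act v (t * γ₀) :=
          Finset.sum_image fun x1 _ x2 _ h => (Equiv.mulRight γ₀).injective h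
      _ = ∑ t ∈ T₂, act (act v t) γ₀ :=
          Finset.sum_congr rfl fun t _ => (hact.2.1 v t γ₀).symm
      _ = act (∑ t ∈ T₂, act v t) γ₀ := (hlin γ₀ T₂ _).symm
      _ = act (φ y) γ₀ := by rw [hval₂]
  · intro u hu γ₀
    have hrepsAll : ∀ (T : Finset ℍ[F, a, b]ˣ) (y : (Bhat F a b)ˣ),
        IsGammaReps R x y T →
        RepsOf (GammaSet R (u * x * gmap F a b γ₀) y) (T.image (Equiv.mulLeft γ₀⁻¹)) := by
      intro T y hT
      exact repsOf_image (Equiv.mulLeft γ₀⁻¹)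
        (fun γ => gammaSet_mul_left hu γ₀ γ)
        (fun g ε hε => by
          show γ₀⁻¹ * (g * ε) = γ₀⁻¹ * g * ε
          rw [mul_assoc])
        ((isGammaReps_iff_repsOf _ _ _ _).1 hT)
    constructor
    · intro y
      obtain ⟨T, hT⟩ := hfin y
      exact ⟨T.image (Equiv.mulLeft γ₀⁻¹),
        (isGammaReps_iff_repsOf _ _ _ _).2 (hrepsAll T y hT)⟩
    · intro ψ hψ ψ' hψ'
      funext y
      obtain ⟨T₁, hT₁, hval₁⟩ := hψ y
      obtain ⟨T₂, hT₂, hval₂⟩ := hψ' y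
      have hreps := hrepsAll T₂ y hT₂
      calc ψ y = ∑ δ ∈ T₁, act v δ := hval₁
        _ = ∑ δ ∈ T₂.image (Equiv.mulLeft γ₀⁻¹), act v δ :=
            sum_repsOf_congr hact ((isGammaReps_iff_repsOf _ _ _ _).1 hT₁) hreps v
        _ = ∑ t ∈ T₂, act v (γ₀⁻¹ * t) :=
            Finset.sum_image fun x1 _ x2 _ h => (Equiv.mulLeft γ₀⁻¹).injective h
        _ = ∑ t ∈ T₂, act (act v γ₀⁻¹) t :=
            Finset.sum_congr rfl fun t _ => (hact.2.1 v γ₀⁻¹ t).symm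
        _ = ψ' y := hval₂.symm
end

section
/- Let x ∈ B̂^× and v ∈ V, let z ∈ N(R̂) = {z ∈ B̂^× : z⁻¹ R̂ z = R̂}, and assume that the sets Γ_{x,y} and Γ_{z⁻¹x, y} are finite for every y ∈ B̂^×. Then φ_{x,v}·z = φ_{z⁻¹x, v}, where (φ·z)(y) = φ(zy). -/
open NumberField Quaternion IsDedekindDomain

noncomputable section
section Aux

variable {F : Type*} [Field F] [NumberField F] {a b : F}
variable {V : Type*} [AddCommGroup V] [Module ℂ V]

lemma mem_Uhat_iff {R : Subring ℍ[F, a, b]} {u : (Bhat F a b)ˣ} :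
    u ∈ Uhat R ↔ (u : Bhat F a b) ∈ Rhat R ∧
      ((u⁻¹ : (Bhat F a b)ˣ) : Bhat F a b) ∈ Rhat R := by
  constructor
  · rintro ⟨w, rfl⟩
    refine ⟨?_, ?_⟩
    · simpa using w.1.2
    · rw [← map_inv]
      simpa using (w⁻¹).1.2
  · rintro ⟨h1, h2⟩
    refine ⟨⟨⟨(u : Bhat F a b), h1⟩, ⟨((u⁻¹ : (Bhat F a b)ˣ) : Bhat F a b), h2⟩, ?_, ?_⟩, ?_⟩
    · exact Subtype.ext (by simp)
    · exact Subtype.ext (by simp)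
    · exact Units.ext rfl

lemma act_ounit (act : V → ℍ[F, a, b]ˣ → V) (hact : IsWeightRep F a b act)
    (w : V) {ε : ℍ[F, a, b]ˣ} (hε : ε ∈ OunitsB F a b) : act w ε = w := by
  obtain ⟨c, rfl⟩ := hε
  have h := hact.2.2.2 w (Units.map (algebraMap (𝓞 F) F).toMonoidHom c)
  have heq : Units.map ((algebraMap F ℍ[F, a, b]).comp (algebraMap (𝓞 F) F)).toMonoidHom c =
      Units.map (algebraMap F ℍ[F, a, b]).toMonoidHom
        (Units.map (algebraMap (𝓞 F) F).toMonoidHom c) := Units.ext rfl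
  rw [heq]
  exact h

lemma sum_reps_congr (act : V → ℍ[F, a, b]ˣ → V) (hact : IsWeightRep F a b act)
    (S : Set ℍ[F, a, b]ˣ) (T T' : Finset ℍ[F, a, b]ˣ)
    (hT1 : ↑T ⊆ S)
    (hT2 : ∀ γ ∈ S, ∃! γ', γ' ∈ T ∧ ∃ ε ∈ OunitsB F a b, γ = γ' * ε)
    (hT'1 : ↑T' ⊆ S)
    (hT'2 : ∀ γ ∈ S, ∃! γ', γ' ∈ T' ∧ ∃ ε ∈ OunitsB F a b, γ = γ' * ε)
    (v : V) : ∑ γ ∈ T, act v γ = ∑ γ ∈ T', act v γ := by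
  have key : ∀ (w : V) (γ ε : ℍ[F, a, b]ˣ), ε ∈ OunitsB F a b →
      act w (γ * ε) = act w γ := by
    intro w γ ε hε
    rw [← hact.2.1, act_ounit act hact _ hε]
  refine Finset.sum_bij' (fun γ hγ => (hT'2 γ (hT1 hγ)).choose)
    (fun γ hγ => (hT2 γ (hT'1 hγ)).choose) ?_ ?_ ?_ ?_ ?_
  · intro γ hγ; exact (hT'2 γ (hT1 hγ)).choose_spec.1.1
  · intro γ hγ; exact (hT2 γ (hT'1 hγ)).choose_spec.1.1
  · intro γ hγ
    obtain ⟨⟨hγ'T, ε, hε, heq⟩, -⟩ := (hT'2 γ (hT1 hγ)).choose_spec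
    have hrep : (hT'2 γ (hT1 hγ)).choose = γ * ε⁻¹ := by
      rw [eq_mul_inv_iff_mul_eq]; exact heq.symm
    exact ((hT2 _ (hT'1 hγ'T)).choose_spec.2 γ
      ⟨hγ, ε⁻¹, (OunitsB F a b).inv_mem hε, hrep⟩).symm
  · intro γ hγ
    obtain ⟨⟨hγ'T, ε, hε, heq⟩, -⟩ := (hT2 γ (hT'1 hγ)).choose_spec
    have hrep : (hT2 γ (hT'1 hγ)).choose = γ * ε⁻¹ := by
      rw [eq_mul_inv_iff_mul_eq]; exact heq.symm
    exact ((hT'2 _ (hT1 hγ'T)).choose_spec.2 γ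
      ⟨hγ, ε⁻¹, (OunitsB F a b).inv_mem hε, hrep⟩).symm
  · intro γ hγ
    obtain ⟨⟨hγ'T, ε, hε, heq⟩, -⟩ := (hT'2 γ (hT1 hγ)).choose_spec
    conv_lhs => rw [heq]
    exact key v _ _ hε

lemma conj_mem_Uhat {R : Subring ℍ[F, a, b]} {z : (Bhat F a b)ˣ} (hz : Normalizes R z)
    {u : (Bhat F a b)ˣ} (hu : u ∈ Uhat R) : z⁻¹ * u * z ∈ Uhat R := by
  rw [mem_Uhat_iff] at hu ⊢
  have hmem : ∀ w ∈ Rhat R,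
      ((z⁻¹ : (Bhat F a b)ˣ) : Bhat F a b) * w * (z : Bhat F a b) ∈ Rhat R := by
    intro w hw
    have : ((z⁻¹ : (Bhat F a b)ˣ) : Bhat F a b) * w * (z : Bhat F a b) ∈
        (fun w => ((z⁻¹ : (Bhat F a b)ˣ) : Bhat F a b) * w * (z : Bhat F a b)) ''
          ((Rhat R : Set (Bhat F a b))) := ⟨w, hw, rfl⟩
    rwa [hz] at this
  constructor
  · simpa [mul_assoc] using hmem _ hu.1
  · have := hmem _ hu.2
    simpa [mul_inv_rev, mul_assoc] using this

lemma conj_mem_Uhat' {R : Subring ℍ[F, a, b]} {z : (Bhat F a b)ˣ} (hz : Normalizes R z)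
    {u : (Bhat F a b)ˣ} (hu : u ∈ Uhat R) : z * u * z⁻¹ ∈ Uhat R := by
  rw [mem_Uhat_iff] at hu ⊢
  have hmem : ∀ w ∈ Rhat R,
      (z : Bhat F a b) * w * ((z⁻¹ : (Bhat F a b)ˣ) : Bhat F a b) ∈ Rhat R := by
    intro w hw
    have hw' : w ∈ (fun w => ((z⁻¹ : (Bhat F a b)ˣ) : Bhat F a b) * w *
        (z : Bhat F a b)) '' ((Rhat R : Set (Bhat F a b))) := hz.symm ▸ hw
    obtain ⟨s, hs, heq⟩ := hw'
    have : (z : Bhat F a b) * w * ((z⁻¹ : (Bhat F a b)ˣ) : Bhat F a b) = s := by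
      rw [← heq]
      simp [mul_assoc]
    rwa [this]
  constructor
  · simpa [mul_assoc] using hmem _ hu.1
  · have := hmem _ hu.2
    simpa [mul_inv_rev, mul_assoc] using this

lemma GammaSet_shift {R : Subring ℍ[F, a, b]} {z : (Bhat F a b)ˣ} (hz : Normalizes R z)
    (x y : (Bhat F a b)ˣ) : GammaSet R x (z * y) = GammaSet R (z⁻¹ * x) y := by
  ext γ
  constructor
  · rintro ⟨u, hu, heq⟩
    refine ⟨z⁻¹ * u * z, conj_mem_Uhat hz hu, ?_⟩
    rw [heq]; group
  · rintro ⟨u, hu, heq⟩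
    refine ⟨z * u * z⁻¹, conj_mem_Uhat' hz hu, ?_⟩
    rw [heq]; group

end Aux

end

/-- for `z` in the normalizer of `R̂`, `φ_{x,v} · z = φ_{z⁻¹x, v}`. -/
theorem statement_8
    {F : Type*} [Field F] [NumberField F]
    (htr : ∀ φ : F →+* ℂ, ∀ x : F, (φ x).im = 0)
    {a b : F} (ha0 : a ≠ 0) (hb0 : b ≠ 0)
    (ha : ∀ τ : F →+* ℝ, τ a < 0) (hb : ∀ τ : F →+* ℝ, τ b < 0)
    (R : Subring ℍ[F, a, b])
    (hRO : ∀ c : NumberField.RingOfIntegers F,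
      algebraMap F ℍ[F, a, b] (algebraMap (NumberField.RingOfIntegers F) F c) ∈ R)
    (hRfg : (Submodule.span (NumberField.RingOfIntegers F) (R : Set ℍ[F, a, b])).FG)
    (hRspan : Submodule.span F (R : Set ℍ[F, a, b]) = ⊤)
    {V : Type*} [AddCommGroup V] [Module ℂ V]
    (act : V → ℍ[F, a, b]ˣ → V) (hact : IsWeightRep F a b act)

    (x : (Bhat F a b)ˣ) (v : V) (z : (Bhat F a b)ˣ) (hz : Normalizes R z)
    (hfin : ∀ y : (Bhat F a b)ˣ, ∃ T : Finset ℍ[F, a, b]ˣ, IsGammaReps R x y T)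
    (hfin' : ∀ y : (Bhat F a b)ˣ, ∃ T : Finset ℍ[F, a, b]ˣ, IsGammaReps R (z⁻¹ * x) y T)
    (φ : (Bhat F a b)ˣ → V) (hφ : IsPhi R act x v φ)
    (ψ : (Bhat F a b)ˣ → V) (hψ : IsPhi R act (z⁻¹ * x) v ψ) :
    ∀ y : (Bhat F a b)ˣ, φ (z * y) = ψ y := by
  intro y
  obtain ⟨T, ⟨hT1, hT2⟩, hTsum⟩ := hφ (z * y)
  obtain ⟨T', ⟨hT'1, hT'2⟩, hT'sum⟩ := hψ y
  rw [hTsum, hT'sum]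
  rw [GammaSet_shift hz x y] at hT1 hT2
  exact sum_reps_congr act hact (GammaSet R (z⁻¹ * x) y) T T' hT1 hT2 hT'1 hT'2 v
end

section
/- Let φ be a quaternionic modular form of weight ρ and level R. Assume that Cl(R) = R̂^× \ B̂^× / B^× is finite, fix representatives x₁, …, x_n ∈ B̂^× of the distinct double cosets, and assume that each Γ_{x_i} is finite and that each set Γ_{x_i, y} (y ∈ B̂^×) is finite. Then for every y ∈ B̂^×, φ(y) = Σ_{i=1}^{n} (1/t_{x_i}) · φ_{x_i, φ(x_i)}(y). -/
open NumberField Quaternion IsDedekindDomain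

section MyHelpers

variable {F : Type*} [Field F] [NumberField F] {a b : F}

lemma my_mem_Uhat_iff (R : Subring ℍ[F, a, b]) (u : (Bhat F a b)ˣ) :
    u ∈ Uhat R ↔ ((u : Bhat F a b) ∈ Rhat R ∧ ((↑(u⁻¹) : Bhat F a b) ∈ Rhat R)) := by
  constructor
  · rintro ⟨w, rfl⟩
    exact ⟨(w : (Rhat R)).2, by
      rw [← map_inv]; exact ((w⁻¹ : (Rhat R)ˣ) : (Rhat R)).2⟩
  · rintro ⟨h1, h2⟩
    refine ⟨⟨⟨(u : Bhat F a b), h1⟩, ⟨((↑(u⁻¹) : Bhat F a b)), h2⟩, ?_, ?_⟩, ?_⟩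
    · exact Subtype.ext (by simp)
    · exact Subtype.ext (by simp)
    · exact Units.ext rfl

lemma my_gmap_val (γ : ℍ[F, a, b]ˣ) :
    ((gmap F a b γ : (Bhat F a b)ˣ) : Bhat F a b) = iotaB F a b (γ : ℍ[F, a, b]) := rfl

lemma my_rxUnits_of (R : Subring ℍ[F, a, b]) {x : (Bhat F a b)ˣ} {δ : ℍ[F, a, b]ˣ}
    (h : ∃ w ∈ Uhat R, gmap F a b δ = x⁻¹ * w * x) : δ ∈ RxUnits R x := by
  obtain ⟨w, hw, hδ⟩ := h
  rw [my_mem_Uhat_iff] at hw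
  constructor
  · exact ⟨(w : Bhat F a b), hw.1, by
      rw [← my_gmap_val, hδ]; simp [Units.val_mul]⟩
  · refine ⟨((↑(w⁻¹) : Bhat F a b)), hw.2, ?_⟩
    rw [← my_gmap_val, map_inv, hδ]
    simp [mul_assoc, Units.val_mul]

lemma my_of_rxUnits (R : Subring ℍ[F, a, b]) {x : (Bhat F a b)ˣ} {δ : ℍ[F, a, b]ˣ}
    (h : δ ∈ RxUnits R x) : ∃ w ∈ Uhat R, gmap F a b δ = x⁻¹ * w * x := by
  obtain ⟨⟨r, hr, hr'⟩, ⟨s, hs, hs'⟩⟩ := h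
  refine ⟨x * gmap F a b δ * x⁻¹, ?_, by group⟩
  rw [my_mem_Uhat_iff]
  constructor
  · have : ((x * gmap F a b δ * x⁻¹ : (Bhat F a b)ˣ) : Bhat F a b) = r := by
      simp only [Units.val_mul, my_gmap_val, hr']
      simp [mul_assoc, Units.mul_inv_cancel_left]
    rw [this]; exact hr
  · have : ((↑((x * gmap F a b δ * x⁻¹)⁻¹) : Bhat F a b)) = s := by
      rw [show (x * gmap F a b δ * x⁻¹)⁻¹ = x * (gmap F a b δ)⁻¹ * x⁻¹ by group]
      rw [← map_inv]
      simp only [Units.val_mul, my_gmap_val, hs']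
      simp [mul_assoc, Units.mul_inv_cancel_left]
    rw [this]; exact hs

lemma my_central {ε : ℍ[F, a, b]ˣ} (hε : ε ∈ OunitsB F a b) (γ : ℍ[F, a, b]ˣ) :
    γ * ε = ε * γ := by
  obtain ⟨c, rfl⟩ := hε
  rw [Units.ext_iff]
  simp only [Units.val_mul, Units.coe_map, MonoidHom.coe_coe, RingHom.coe_comp,
    Function.comp_apply]
  exact (Algebra.commutes (algebraMap (𝓞 F) F (c : 𝓞 F)) (γ : ℍ[F, a, b])).symm

lemma my_one_mem_rxUnits (R : Subring ℍ[F, a, b]) (x : (Bhat F a b)ˣ) :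
    (1 : ℍ[F, a, b]ˣ) ∈ RxUnits R x := by
  apply my_rxUnits_of R
  exact ⟨1, one_mem _, by simp [Units.ext_iff, my_gmap_val]⟩

end MyHelpers

/-- every quaternionic modular form is a combination
`φ = Σ_{x ∈ Cl(R)} (1/t_x) φ_{x, φ(x)}` of the forms with minimal support. -/
theorem statement_9
    {F : Type*} [Field F] [NumberField F]
    (htr : ∀ φ : F →+* ℂ, ∀ x : F, (φ x).im = 0)
    {a b : F} (ha0 : a ≠ 0) (hb0 : b ≠ 0)
    (ha : ∀ τ : F →+* ℝ, τ a < 0) (hb : ∀ τ : F →+* ℝ, τ b < 0)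
    (R : Subring ℍ[F, a, b])
    (hRO : ∀ c : NumberField.RingOfIntegers F,
      algebraMap F ℍ[F, a, b] (algebraMap (NumberField.RingOfIntegers F) F c) ∈ R)
    (hRfg : (Submodule.span (NumberField.RingOfIntegers F) (R : Set ℍ[F, a, b])).FG)
    (hRspan : Submodule.span F (R : Set ℍ[F, a, b]) = ⊤)
    {V : Type*} [AddCommGroup V] [Module ℂ V]
    (act : V → ℍ[F, a, b]ˣ → V) (hact : IsWeightRep F a b act)

    (φ : (Bhat F a b)ˣ → V) (hφ : IsQMF R act φ)
    (xs : Finset (Bhat F a b)ˣ) (hcl : IsClassReps R xs)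
    (Tx : (Bhat F a b)ˣ → Finset ℍ[F, a, b]ˣ)
    (hTx : ∀ x ∈ xs, IsStabReps R x (Tx x))
    (hfin : ∀ x ∈ xs, ∀ y : (Bhat F a b)ˣ, ∃ T : Finset ℍ[F, a, b]ˣ, IsGammaReps R x y T)
    (φs : (Bhat F a b)ˣ → (Bhat F a b)ˣ → V)
    (hφs : ∀ x ∈ xs, IsPhi R act x (φ x) (φs x)) :
    ∀ y : (Bhat F a b)ˣ, φ y = ∑ x ∈ xs, ((Tx x).card : ℂ)⁻¹ • φs x y := by
  intro y
  obtain ⟨x₀, ⟨hx₀, u, hu, γ, hy⟩, huniq⟩ := hcl y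
  have hgγ : gmap F a b γ = x₀⁻¹ * u⁻¹ * y := by rw [hy]; group
  have hxeq : ∀ x ∈ xs, (GammaSet R x y).Nonempty → x = x₀ := by
    rintro x hx ⟨γ', u', hu', hγ'⟩
    refine huniq x ⟨hx, u'⁻¹, (Uhat R).inv_mem hu', γ', ?_⟩
    rw [hγ']; group
  have key : ∀ γ' ∈ GammaSet R x₀ y, act (φ x₀) γ' = φ y := by
    rintro γ' ⟨u', hu', hγ'⟩
    rw [← hφ u'⁻¹ ((Uhat R).inv_mem hu') γ' x₀]
    congr 1
    rw [hγ']; group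
  have hzero : ∀ x ∈ xs, x ≠ x₀ → ((Tx x).card : ℂ)⁻¹ • φs x y = 0 := by
    intro x hx hne
    obtain ⟨T, hT, hval⟩ := hφs x hx y
    have hTe : T = ∅ := by
      by_contra h
      obtain ⟨γ', hγ'⟩ := Finset.nonempty_of_ne_empty h
      exact hne (hxeq x hx ⟨γ', hT.1 hγ'⟩)
    rw [hval, hTe, Finset.sum_empty, smul_zero]
  obtain ⟨T, hT, hval⟩ := hφs x₀ hx₀ y
  have hstab := hTx x₀ hx₀
  have hmul : ∀ δ : ℍ[F, a, b]ˣ, δ ∈ RxUnits R x₀ → δ * γ ∈ GammaSet R x₀ y := by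
    intro δ hδ
    obtain ⟨w, hw, hwδ⟩ := my_of_rxUnits R hδ
    refine ⟨w * u⁻¹, mul_mem hw ((Uhat R).inv_mem hu), ?_⟩
    rw [map_mul, hwδ, hgγ]; group
  have hdiv : ∀ γ' ∈ GammaSet R x₀ y, γ' * γ⁻¹ ∈ RxUnits R x₀ := by
    rintro γ' ⟨u', hu', hγ'⟩
    apply my_rxUnits_of R
    refine ⟨u' * u, mul_mem hu' hu, ?_⟩
    rw [map_mul, map_inv, hγ', hgγ]; group
  have hrep : ∀ δ ∈ Tx x₀, ∃! γ'' : ℍ[F, a, b]ˣ,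
      γ'' ∈ T ∧ ∃ ε ∈ OunitsB F a b, δ * γ = γ'' * ε :=
    fun δ hδ => hT.2 (δ * γ) (hmul δ (hstab.1 hδ))
  have hcard : (Tx x₀).card = T.card := by
    refine Finset.card_bij (fun δ hδ => (hrep δ hδ).choose) ?_ ?_ ?_
    · intro δ hδ; exact (hrep δ hδ).choose_spec.1.1
    · intro δ₁ h₁ δ₂ h₂ heq
      obtain ⟨⟨hc₁T, ε₁, hε₁, he₁⟩, -⟩ := (hrep δ₁ h₁).choose_spec
      obtain ⟨⟨hc₂T, ε₂, hε₂, he₂⟩, -⟩ := (hrep δ₂ h₂).choose_spec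
      have heq' : (hrep δ₁ h₁).choose = (hrep δ₂ h₂).choose := heq
      rw [← heq'] at he₂
      have hcomm := my_central (mul_mem (inv_mem hε₂) hε₁) γ
      have hδeq : δ₁ = δ₂ * (ε₂⁻¹ * ε₁) := by
        have h3 : δ₁ * γ = δ₂ * (ε₂⁻¹ * ε₁) * γ := by
          rw [he₁, mul_assoc δ₂, ← hcomm, ← mul_assoc, he₂]
          group
        exact mul_right_cancel h3
      exact (hstab.2 δ₁ (hstab.1 h₁)).unique ⟨h₁, 1, one_mem _, (mul_one δ₁).symm⟩
        ⟨h₂, ε₂⁻¹ * ε₁, mul_mem (inv_mem hε₂) hε₁, hδeq⟩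
    · intro γ'' hγ''
      obtain ⟨δ, ⟨hδT, ε, hε, hδe⟩, -⟩ := hstab.2 (γ'' * γ⁻¹) (hdiv γ'' (hT.1 hγ''))
      have hcomm := my_central (inv_mem hε) γ
      have hδγ : δ * γ = γ'' * ε⁻¹ := by
        calc δ * γ = (δ * ε) * (ε⁻¹ * γ) := by group
          _ = (γ'' * γ⁻¹) * (γ * ε⁻¹) := by rw [← hδe, ← hcomm]
          _ = γ'' * ε⁻¹ := by group
      exact ⟨δ, hδT, show (hrep δ hδT).choose = γ'' from
        ((hrep δ hδT).choose_spec.2 γ'' ⟨hγ'', ε⁻¹, inv_mem hε, hδγ⟩).symm⟩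
  have hcard0 : (Tx x₀).card ≠ 0 := by
    obtain ⟨δ, ⟨hδ, -⟩, -⟩ := hstab.2 1 (my_one_mem_rxUnits R x₀)
    exact Finset.card_ne_zero_of_mem hδ
  rw [Finset.sum_eq_single_of_mem x₀ hx₀ hzero, hval,
    Finset.sum_congr rfl (fun γ' h => key γ' (hT.1 h)), Finset.sum_const, ← hcard,
    ← Nat.cast_smul_eq_nsmul ℂ, smul_smul,
    inv_mul_cancel₀ (Nat.cast_ne_zero.mpr hcard0), one_smul]
end
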